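/- arXiv:1311.4031 — 12 statements merged into one kernel-verified Lean document; each statement's English description precedes it below -/
import Mathlib

section
/- Let L>0 and define g:ℝ→ℝ by g(τ) = √(3τ²−1)·cos(2τL) − 3τ·sin(τL)·sinh(√(3τ²−1)·L) − √(3τ²−1)·cos(τL)·cosh(√(3τ²−1)·L). Then there exist a positive integer J and a constant C>0 such that for every integer j ≥ J the equation g(τ)=0 has exactly one solution τ_j in the interval [jπ/L, (j+1)π/L), and this solution satisfies |τ_j − jπ/L − 5π/(6L)| ≤ C/j. -/
set_option maxHeartbeats 1000000
open Real


noncomputable def sfn (τ : ℝ) : ℝ := Real.sqrt (3 * τ ^ 2 - 1)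
noncomputable def Efn (L τ : ℝ) : ℝ := Real.exp (-(sfn τ * L))
noncomputable def Gfn (L τ : ℝ) : ℝ :=
  3 * τ * Real.sin (τ * L) * (1 - (Efn L τ) ^ 2)
    + sfn τ * Real.cos (τ * L) * (1 + (Efn L τ) ^ 2)
    - 2 * sfn τ * Efn L τ * Real.cos (2 * τ * L)
noncomputable def dfn (L τ : ℝ) : ℝ := -Real.cos (τ * L) / (sfn τ + Real.sqrt 3 * τ)
noncomputable def rfn (L τ : ℝ) : ℝ :=
  (Efn L τ) ^ 2 * (sfn τ * Real.cos (τ * L) - 3 * τ * Real.sin (τ * L))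
    - 2 * sfn τ * Efn L τ * Real.cos (2 * τ * L)


lemma g_eq (L τ : ℝ) :
    Real.sqrt (3 * τ ^ 2 - 1) * Real.cos (2 * τ * L)
      - 3 * τ * Real.sin (τ * L) * Real.sinh (Real.sqrt (3 * τ ^ 2 - 1) * L)
      - Real.sqrt (3 * τ ^ 2 - 1) * Real.cos (τ * L)
          * Real.cosh (Real.sqrt (3 * τ ^ 2 - 1) * L)
    = -(Real.exp (sfn τ * L) / 2) * Gfn L τ := by
  have hE : Efn L τ = (Real.exp (sfn τ * L))⁻¹ := by
    rw [Efn, Real.exp_neg]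
  rw [Gfn, hE, Real.sinh_eq, Real.cosh_eq, Real.exp_neg, sfn]
  have h := Real.exp_ne_zero (Real.sqrt (3 * τ ^ 2 - 1) * L)
  field_simp
  ring

lemma s_sq {τ : ℝ} (hτ : 1 ≤ τ) : sfn τ ^ 2 = 3 * τ ^ 2 - 1 := by
  rw [sfn, Real.sq_sqrt]; nlinarith

lemma s_lb {τ : ℝ} (hτ : 1 ≤ τ) : τ ≤ sfn τ := by
  rw [sfn]
  have h : τ = Real.sqrt (τ ^ 2) := by rw [Real.sqrt_sq (by linarith)]
  rw [h]; apply Real.sqrt_le_sqrt; nlinarith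

lemma s_ub {τ : ℝ} (hτ : 1 ≤ τ) : sfn τ ≤ 2 * τ := by
  rw [sfn]
  have h : 2 * τ = Real.sqrt ((2 * τ) ^ 2) := by rw [Real.sqrt_sq (by linarith)]
  rw [h]; apply Real.sqrt_le_sqrt; nlinarith

lemma sqrt3_lb : (1:ℝ) ≤ Real.sqrt 3 := by
  rw [show (1:ℝ) = Real.sqrt 1 by simp]
  exact Real.sqrt_le_sqrt (by norm_num)

lemma sqrt3_ub : Real.sqrt 3 ≤ 2 := by
  rw [show (2:ℝ) = Real.sqrt 4 by rw [show (4:ℝ) = 2^2 by norm_num, Real.sqrt_sq]; norm_num]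
  exact Real.sqrt_le_sqrt (by norm_num)

lemma exp_big {L τ : ℝ} (hL : 0 < L) (hτ : 1 ≤ τ) (hτ48 : 48 / L ^ 2 ≤ τ) :
    9 * τ ^ 2 ≤ Real.exp (τ * L) := by
  have h1 : 1 + τ * L / 4 ≤ Real.exp (τ * L / 4) := by linarith [Real.add_one_le_exp (τ * L / 4)]
  have h2 : (1 + τ * L / 4) ^ 4 ≤ Real.exp (τ * L / 4) ^ 4 := by
    apply pow_le_pow_left₀ (by positivity) h1
  have h3 : Real.exp (τ * L / 4) ^ 4 = Real.exp (τ * L) := by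
    rw [← Real.exp_nat_mul]; norm_num; ring_nf
  have h4 : 48 ≤ τ * L ^ 2 := by
    rw [div_le_iff₀ (by positivity)] at hτ48; linarith
  have h5 : (τ * L / 4) ^ 4 ≤ (1 + τ * L / 4) ^ 4 :=
    pow_le_pow_left₀ (by positivity) (by linarith) 4
  have h7 : (48:ℝ) ^ 2 ≤ (τ * L ^ 2) ^ 2 := by nlinarith
  have h6 : 2304 * τ ^ 2 ≤ (τ * L) ^ 4 := by nlinarith [sq_nonneg τ, sq_nonneg (τ * L ^ 2)]
  have h8 : (τ * L / 4) ^ 4 = (τ * L) ^ 4 / 256 := by ring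
  linarith

lemma E_pos {L τ : ℝ} : 0 < Efn L τ := Real.exp_pos _

lemma E_le {L τ : ℝ} (hL : 0 < L) (hτ : 1 ≤ τ) : Efn L τ ≤ Real.exp (-(τ * L)) := by
  rw [Efn]; apply Real.exp_le_exp.2
  have := s_lb hτ; nlinarith

lemma tE_le {L τ : ℝ} (hL : 0 < L) (hτ : 1 ≤ τ) (hτ48 : 48 / L ^ 2 ≤ τ) :
    τ * Efn L τ ≤ 1 / (9 * τ) := by
  have h1 := E_le hL hτ
  have h2 := exp_big hL hτ hτ48
  have h3 : Real.exp (-(τ * L)) = (Real.exp (τ * L))⁻¹ := Real.exp_neg _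
  have h5 : τ * Efn L τ ≤ τ * Real.exp (-(τ * L)) :=
    mul_le_mul_of_nonneg_left h1 (by linarith)
  have h6 : τ * Real.exp (-(τ * L)) ≤ 1 / (9 * τ) := by
    rw [h3, inv_eq_one_div, mul_one_div, div_le_div_iff₀ (Real.exp_pos _) (by positivity)]
    nlinarith
  linarith

lemma d_bound {L τ : ℝ} (hτ : 1 ≤ τ) : |dfn L τ| ≤ 1 / (2 * τ) := by
  have hden : 2 * τ ≤ sfn τ + Real.sqrt 3 * τ := by
    have := s_lb hτ; have := sqrt3_lb; nlinarith
  rw [dfn, abs_div, abs_neg, abs_of_nonneg (by linarith : (0:ℝ) ≤ sfn τ + Real.sqrt 3 * τ)]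
  exact div_le_div₀ (by norm_num) (abs_cos_le_one _) (by linarith) hden

lemma r_bound {L τ : ℝ} (hL : 0 < L) (hτ : 1 ≤ τ) (hτ48 : 48 / L ^ 2 ≤ τ) :
    |rfn L τ| ≤ 1 / τ := by
  have hs0 : 0 ≤ sfn τ := le_trans (by linarith) (s_lb hτ)
  have hsu := s_ub hτ
  have hE0 : (0:ℝ) < Efn L τ := E_pos
  have hE1 : Efn L τ ≤ 1 := by
    rw [Efn, Real.exp_le_one_iff]; nlinarith [s_lb hτ]
  have hA : |sfn τ * Real.cos (τ * L) - 3 * τ * Real.sin (τ * L)| ≤ 5 * τ := by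
    have h1 : |sfn τ * Real.cos (τ * L)| ≤ 2 * τ := by
      rw [abs_mul, abs_of_nonneg hs0]
      nlinarith [abs_cos_le_one (τ * L), abs_nonneg (Real.cos (τ * L))]
    have h2 : |3 * τ * Real.sin (τ * L)| ≤ 3 * τ := by
      rw [abs_mul, abs_of_nonneg (by linarith : (0:ℝ) ≤ 3 * τ)]
      nlinarith [abs_sin_le_one (τ * L), abs_nonneg (Real.sin (τ * L))]
    calc |sfn τ * Real.cos (τ * L) - 3 * τ * Real.sin (τ * L)|
        ≤ |sfn τ * Real.cos (τ * L)| + |3 * τ * Real.sin (τ * L)| := abs_sub _ _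
      _ ≤ 5 * τ := by linarith
  have hB : |2 * sfn τ * Efn L τ * Real.cos (2 * τ * L)| ≤ 4 * τ * Efn L τ := by
    rw [abs_mul, abs_mul, abs_mul, abs_two, abs_of_nonneg hs0, abs_of_nonneg (le_of_lt hE0)]
    have := abs_cos_le_one (2 * τ * L)
    have := abs_nonneg (Real.cos (2 * τ * L))
    have hm1 : 2 * sfn τ * Efn L τ * |Real.cos (2 * τ * L)| ≤ 2 * sfn τ * Efn L τ * 1 :=
      mul_le_mul_of_nonneg_left (abs_cos_le_one _) (by positivity)
    have hm2 : sfn τ * Efn L τ ≤ 2 * τ * Efn L τ :=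
      mul_le_mul_of_nonneg_right hsu (le_of_lt hE0)
    nlinarith
  have htE := tE_le hL hτ hτ48
  have step : |rfn L τ| ≤ 9 * (τ * Efn L τ) := by
    calc |rfn L τ| ≤ |(Efn L τ) ^ 2 * (sfn τ * Real.cos (τ * L) - 3 * τ * Real.sin (τ * L))|
          + |2 * sfn τ * Efn L τ * Real.cos (2 * τ * L)| := abs_sub _ _
      _ ≤ (Efn L τ) ^ 2 * (5 * τ) + 4 * τ * Efn L τ := by
          rw [abs_mul, abs_pow, abs_of_nonneg (le_of_lt hE0)]
          have := mul_le_mul_of_nonneg_left hA (le_of_lt (pow_pos hE0 2))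
          linarith
      _ ≤ 9 * (τ * Efn L τ) := by nlinarith [mul_nonneg (sub_nonneg.2 hE1) (le_of_lt hE0)]
  calc |rfn L τ| ≤ 9 * (τ * Efn L τ) := step
    _ ≤ 9 * (1 / (9 * τ)) := by linarith
    _ ≤ 1 / τ := le_of_eq (by field_simp)

lemma E_le_one {L τ : ℝ} (hL : 0 < L) (hτ : 1 ≤ τ) : Efn L τ ≤ 1 := by
  rw [Efn, Real.exp_le_one_iff]
  nlinarith [s_lb hτ]

lemma G_decomp {L τ : ℝ} (hτ : 1 ≤ τ) :
    Gfn L τ = 2 * Real.sqrt 3 * τ * Real.sin (τ * L + π / 6) + (dfn L τ + rfn L τ) := by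
  have h1 : Real.sin (τ * L + π / 6)
      = Real.sin (τ * L) * (Real.sqrt 3 / 2) + Real.cos (τ * L) * (1/2) := by
    rw [Real.sin_add, Real.sin_pi_div_six, Real.cos_pi_div_six]
  have hs3 : Real.sqrt 3 * Real.sqrt 3 = 3 := Real.mul_self_sqrt (by norm_num)
  have hden : 0 < sfn τ + Real.sqrt 3 * τ := by
    have := s_lb hτ; have := sqrt3_lb; nlinarith
  have hkey : sfn τ - Real.sqrt 3 * τ = -1 / (sfn τ + Real.sqrt 3 * τ) := by
    rw [eq_div_iff (ne_of_gt hden)]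
    have := s_sq hτ; nlinarith
  have hdf : dfn L τ = (sfn τ - Real.sqrt 3 * τ) * Real.cos (τ * L) := by
    rw [dfn, hkey]; ring
  rw [Gfn, rfn, hdf, h1]; linear_combination (-(τ * Real.sin (τ * L))) * hs3

lemma abs_mul_le {a b c d : ℝ} (h1 : |a| ≤ c) (h2 : |b| ≤ d) : |a * b| ≤ c * d := by
  rw [abs_mul]
  exact mul_le_mul h1 h2 (abs_nonneg _) ((abs_nonneg a).trans h1)

lemma hasDerivAt_sfn {τ : ℝ} (hτ : 1 ≤ τ) : HasDerivAt sfn (3 * τ / sfn τ) τ := by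
  have h : HasDerivAt (fun x : ℝ => 3 * x ^ 2 - 1) (6 * τ) τ := by
    have h0 := ((hasDerivAt_pow 2 τ).const_mul 3).sub_const 1
    exact h0.congr_deriv (by push_cast; ring)
  have h2 := h.sqrt (by nlinarith : 3 * τ ^ 2 - 1 ≠ 0)
  have he : sfn = fun y : ℝ => Real.sqrt (3 * y ^ 2 - 1) := rfl
  rw [he]
  convert h2 using 1
  show 3 * τ / Real.sqrt (3 * τ ^ 2 - 1) = 6 * τ / (2 * Real.sqrt (3 * τ ^ 2 - 1))
  ring

lemma hasDerivAt_Efn {L τ : ℝ} (hτ : 1 ≤ τ) :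
    HasDerivAt (Efn L) (Efn L τ * -(3 * τ / sfn τ * L)) τ := by
  have h := (((hasDerivAt_sfn hτ).mul_const L).neg).exp
  exact h

lemma hasDerivAt_main {L τ : ℝ} :
    HasDerivAt (fun x : ℝ => 2 * Real.sqrt 3 * x * Real.sin (x * L + π / 6))
      (2 * Real.sqrt 3 * Real.sin (τ * L + π / 6)
        + 2 * Real.sqrt 3 * τ * (Real.cos (τ * L + π / 6) * L)) τ := by
  have h1 : HasDerivAt (fun x : ℝ => 2 * Real.sqrt 3 * x) (2 * Real.sqrt 3) τ := by
    simpa using (hasDerivAt_id τ).const_mul (2 * Real.sqrt 3)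
  have h2 : HasDerivAt (fun x : ℝ => Real.sin (x * L + π / 6))
      (Real.cos (τ * L + π / 6) * L) τ := ((hasDerivAt_mul_const L).add_const (π / 6)).sin
  exact h1.mul h2

lemma hasDerivAt_dfn {L τ : ℝ} (hτ : 1 ≤ τ) :
    HasDerivAt (dfn L)
      ((Real.sin (τ * L) * L * (sfn τ + Real.sqrt 3 * τ)
        + Real.cos (τ * L) * (3 * τ / sfn τ + Real.sqrt 3)) / (sfn τ + Real.sqrt 3 * τ) ^ 2) τ := by
  have hden0 : sfn τ + Real.sqrt 3 * τ ≠ 0 := by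
    have := s_lb hτ; have := sqrt3_lb; nlinarith
  have hnum : HasDerivAt (fun x : ℝ => -Real.cos (x * L)) (Real.sin (τ * L) * L) τ := by
    exact ((hasDerivAt_mul_const (x := τ) L).cos.neg).congr_deriv (by ring)
  have hden : HasDerivAt (fun x : ℝ => sfn x + Real.sqrt 3 * x) (3 * τ / sfn τ + Real.sqrt 3) τ :=
    (hasDerivAt_sfn hτ).add (by simpa using (hasDerivAt_id τ).const_mul (Real.sqrt 3))
  have h := hnum.div hden hden0
  have hd : dfn L = fun x : ℝ => -Real.cos (x * L) / (sfn x + Real.sqrt 3 * x) := rfl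
  rw [hd]
  exact h.congr_deriv (by ring)

lemma dderiv_bound {L τ : ℝ} (hL : 0 < L) (hτ : 1 ≤ τ) :
    |(Real.sin (τ * L) * L * (sfn τ + Real.sqrt 3 * τ)
      + Real.cos (τ * L) * (3 * τ / sfn τ + Real.sqrt 3)) / (sfn τ + Real.sqrt 3 * τ) ^ 2|
      ≤ L + 5 := by
  have hs := s_lb hτ
  have h3 := sqrt3_lb
  have h3u := sqrt3_ub
  have hden : 2 ≤ sfn τ + Real.sqrt 3 * τ := by nlinarith
  have hfrac : 3 * τ / sfn τ ≤ 3 := by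
    rw [div_le_iff₀ (by linarith)]; linarith
  have hfrac0 : 0 ≤ 3 * τ / sfn τ := div_nonneg (by linarith) (by linarith)
  have hnum : |Real.sin (τ * L) * L * (sfn τ + Real.sqrt 3 * τ)
      + Real.cos (τ * L) * (3 * τ / sfn τ + Real.sqrt 3)| ≤ L * (sfn τ + Real.sqrt 3 * τ) + 5 := by
    have b1 : |Real.sin (τ * L) * L * (sfn τ + Real.sqrt 3 * τ)| ≤ 1 * L * (sfn τ + Real.sqrt 3 * τ) :=
      abs_mul_le (abs_mul_le (abs_sin_le_one _) (le_of_eq (abs_of_pos hL)))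
        (le_of_eq (abs_of_pos (by linarith)))
    have b2 : |Real.cos (τ * L) * (3 * τ / sfn τ + Real.sqrt 3)| ≤ 1 * 5 :=
      abs_mul_le (abs_cos_le_one _) (by rw [abs_of_nonneg (by linarith)]; linarith)
    calc |_ + _| ≤ _ + _ := abs_add_le _ _
      _ ≤ L * (sfn τ + Real.sqrt 3 * τ) + 5 := by linarith
  rw [abs_div, abs_of_nonneg (by positivity : (0:ℝ) ≤ (sfn τ + Real.sqrt 3 * τ)^2),
    div_le_iff₀ (by nlinarith)]
  nlinarith [sq_nonneg (sfn τ + Real.sqrt 3 * τ - 2),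
    mul_nonneg (le_of_lt hL)
      (by nlinarith : (0:ℝ) ≤ (sfn τ + Real.sqrt 3 * τ) ^ 2 - (sfn τ + Real.sqrt 3 * τ))]

lemma A_bound {L τ : ℝ} (hτ : 1 ≤ τ) :
    |sfn τ * Real.cos (τ * L) - 3 * τ * Real.sin (τ * L)| ≤ 5 * τ := by
  have hs0 : 0 ≤ sfn τ := le_trans (by linarith) (s_lb hτ)
  have b1 : |sfn τ * Real.cos (τ * L)| ≤ 2 * τ * 1 :=
    abs_mul_le (by rw [abs_of_nonneg hs0]; exact s_ub hτ) (abs_cos_le_one _)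
  have b2 : |3 * τ * Real.sin (τ * L)| ≤ 3 * τ * 1 :=
    abs_mul_le (by rw [abs_of_nonneg (by linarith : (0:ℝ) ≤ 3 * τ)]) (abs_sin_le_one _)
  calc |sfn τ * Real.cos (τ * L) - 3 * τ * Real.sin (τ * L)|
      ≤ |sfn τ * Real.cos (τ * L)| + |3 * τ * Real.sin (τ * L)| := abs_sub _ _
    _ ≤ 5 * τ := by linarith

lemma rderiv {L τ : ℝ} (hL : 0 < L) (hτ : 1 ≤ τ) (hτ48 : 48 / L ^ 2 ≤ τ) :
    ∃ D : ℝ, HasDerivAt (rfn L) D τ ∧ |D| ≤ 2 + 7 * L := by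
  have hs0 : (0:ℝ) < sfn τ := lt_of_lt_of_le (by linarith) (s_lb hτ)
  have hsu := s_ub hτ
  have hE0 : (0:ℝ) < Efn L τ := Real.exp_pos _
  have hE1 : Efn L τ ≤ 1 := E_le_one hL hτ
  have hq0 : 0 ≤ 3 * τ / sfn τ := div_nonneg (by linarith) hs0.le
  have hq3 : 3 * τ / sfn τ ≤ 3 := by
    rw [div_le_iff₀ hs0]; nlinarith [s_lb hτ]
  have hE := hasDerivAt_Efn (L := L) hτ
  have hE2 : HasDerivAt (fun x => Efn L x ^ 2)
      ((2:ℕ) * Efn L τ ^ (2 - 1) * (Efn L τ * -(3 * τ / sfn τ * L))) τ := hE.pow 2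
  have hcos1 : HasDerivAt (fun x : ℝ => Real.cos (x * L)) (-Real.sin (τ * L) * L) τ :=
    (hasDerivAt_mul_const L).cos
  have hsin1 : HasDerivAt (fun x : ℝ => Real.sin (x * L)) (Real.cos (τ * L) * L) τ :=
    (hasDerivAt_mul_const L).sin
  have h3x : HasDerivAt (fun x : ℝ => 3 * x) 3 τ := by
    simpa using (hasDerivAt_id τ).const_mul (3:ℝ)
  have h2L : HasDerivAt (fun x : ℝ => 2 * x * L) (2 * L) τ := by
    simpa using ((hasDerivAt_id τ).const_mul (2:ℝ)).mul_const L
  have hcos2 : HasDerivAt (fun x : ℝ => Real.cos (2 * x * L)) (-Real.sin (2 * τ * L) * (2 * L)) τ :=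
    h2L.cos
  have hA : HasDerivAt (fun x : ℝ => sfn x * Real.cos (x * L) - 3 * x * Real.sin (x * L))
      (3 * τ / sfn τ * Real.cos (τ * L) + sfn τ * (-Real.sin (τ * L) * L)
        - (3 * Real.sin (τ * L) + 3 * τ * (Real.cos (τ * L) * L))) τ :=
    ((hasDerivAt_sfn hτ).mul hcos1).sub (h3x.mul hsin1)
  have hsE : HasDerivAt (fun x : ℝ => 2 * sfn x * Efn L x)
      (2 * (3 * τ / sfn τ) * Efn L τ + 2 * sfn τ * (Efn L τ * -(3 * τ / sfn τ * L))) τ := by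
    exact ((hasDerivAt_sfn hτ).const_mul (2:ℝ)).mul hE
  have htot := (hE2.mul hA).sub (hsE.mul hcos2)
  refine ⟨_, htot, ?_⟩
  -- now bound the derivative value
  have hτE : τ * Efn L τ ≤ 1 / 9 := by
    have := tE_le hL hτ hτ48
    have h9 : 1 / (9 * τ) ≤ 1 / 9 := by
      rw [div_le_div_iff₀ (by positivity) (by norm_num)]; linarith
    linarith
  have hEτE : Efn L τ ≤ τ * Efn L τ := by nlinarith
  have bA := A_bound (L := L) hτ
  have bAp : |3 * τ / sfn τ * Real.cos (τ * L) + sfn τ * (-Real.sin (τ * L) * L)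
      - (3 * Real.sin (τ * L) + 3 * τ * (Real.cos (τ * L) * L))| ≤ 6 + 5 * τ * L := by
    have c1 : |3 * τ / sfn τ * Real.cos (τ * L)| ≤ 3 * 1 :=
      abs_mul_le (by rw [abs_of_nonneg hq0]; exact hq3) (abs_cos_le_one _)
    have c2 : |sfn τ * (-Real.sin (τ * L) * L)| ≤ 2 * τ * (1 * L) :=
      abs_mul_le (by rw [abs_of_nonneg hs0.le]; exact hsu)
        (abs_mul_le (by rw [abs_neg]; exact abs_sin_le_one _) (le_of_eq (abs_of_pos hL)))
    have c3 : |3 * Real.sin (τ * L) + 3 * τ * (Real.cos (τ * L) * L)| ≤ 3 * 1 + 3 * τ * (1 * L) := by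
      refine (abs_add_le _ _).trans ?_
      have := abs_mul_le (le_of_eq (abs_of_nonneg (by norm_num : (0:ℝ) ≤ 3))) (abs_sin_le_one (τ * L))
      have := abs_mul_le (le_of_eq (abs_of_nonneg (by linarith : (0:ℝ) ≤ 3 * τ)))
        (abs_mul_le (abs_cos_le_one (τ * L)) (le_of_eq (abs_of_pos hL)))
      linarith
    calc |_ - _| ≤ |3 * τ / sfn τ * Real.cos (τ * L) + sfn τ * (-Real.sin (τ * L) * L)|
          + |3 * Real.sin (τ * L) + 3 * τ * (Real.cos (τ * L) * L)| := abs_sub _ _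
      _ ≤ (3 * 1 + 2 * τ * (1 * L)) + (3 * 1 + 3 * τ * (1 * L)) := by
          have := (abs_add_le (3 * τ / sfn τ * Real.cos (τ * L)) (sfn τ * (-Real.sin (τ * L) * L)))
          linarith
      _ ≤ 6 + 5 * τ * L := by nlinarith
  have t1 : |(2:ℕ) * Efn L τ ^ (2 - 1) * (Efn L τ * -(3 * τ / sfn τ * L))
      * (sfn τ * Real.cos (τ * L) - 3 * τ * Real.sin (τ * L))|
      ≤ 2 * Efn L τ * (1 * (3 * L)) * (5 * τ) := by
    refine abs_mul_le (abs_mul_le ?_ ?_) bA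
    · rw [show ((2:ℕ):ℝ) * Efn L τ ^ (2 - 1) = 2 * Efn L τ by norm_num, abs_mul, abs_two,
        abs_of_pos hE0]
    · refine abs_mul_le (by rw [abs_of_pos hE0]; exact hE1) ?_
      rw [abs_neg, abs_of_nonneg (by positivity)]
      nlinarith
  have t2 : |Efn L τ ^ 2 * (3 * τ / sfn τ * Real.cos (τ * L) + sfn τ * (-Real.sin (τ * L) * L)
      - (3 * Real.sin (τ * L) + 3 * τ * (Real.cos (τ * L) * L)))|
      ≤ Efn L τ * (6 + 5 * τ * L) := by
    refine abs_mul_le ?_ bAp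
    rw [abs_pow, abs_of_pos hE0]
    nlinarith
  have t3 : |(2 * (3 * τ / sfn τ) * Efn L τ + 2 * sfn τ * (Efn L τ * -(3 * τ / sfn τ * L)))
      * Real.cos (2 * τ * L)| ≤ (6 * Efn L τ + 12 * τ * L * Efn L τ) * 1 := by
    refine abs_mul_le ?_ (abs_cos_le_one _)
    refine (abs_add_le _ _).trans ?_
    have d1 : |2 * (3 * τ / sfn τ) * Efn L τ| ≤ 2 * 3 * Efn L τ :=
      abs_mul_le (by rw [abs_mul, abs_two, abs_of_nonneg hq0]; nlinarith)
        (le_of_eq (abs_of_pos hE0))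
    have d2 : |2 * sfn τ * (Efn L τ * -(3 * τ / sfn τ * L))| ≤ 2 * (2 * τ) * (Efn L τ * (3 * L)) := by
      refine abs_mul_le (by rw [abs_mul, abs_two, abs_of_nonneg hs0.le]; nlinarith) ?_
      refine abs_mul_le (le_of_eq (abs_of_pos hE0)) ?_
      rw [abs_neg, abs_of_nonneg (by positivity)]
      nlinarith
    nlinarith [hE0.le]
  have t4 : |2 * sfn τ * Efn L τ * (-Real.sin (2 * τ * L) * (2 * L))|
      ≤ 2 * (2 * τ) * Efn L τ * (1 * (2 * L)) := by
    refine abs_mul_le (abs_mul_le (by rw [abs_mul, abs_two, abs_of_nonneg hs0.le]; nlinarith)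
      (le_of_eq (abs_of_pos hE0))) ?_
    exact abs_mul_le (by rw [abs_neg]; exact abs_sin_le_one _)
      (le_of_eq (abs_of_pos (by linarith : (0:ℝ) < 2 * L)))
  have tri : |(2:ℕ) * Efn L τ ^ (2 - 1) * (Efn L τ * -(3 * τ / sfn τ * L))
        * (sfn τ * Real.cos (τ * L) - 3 * τ * Real.sin (τ * L))
      + Efn L τ ^ 2 * (3 * τ / sfn τ * Real.cos (τ * L) + sfn τ * (-Real.sin (τ * L) * L)
        - (3 * Real.sin (τ * L) + 3 * τ * (Real.cos (τ * L) * L)))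
      - ((2 * (3 * τ / sfn τ) * Efn L τ + 2 * sfn τ * (Efn L τ * -(3 * τ / sfn τ * L)))
          * Real.cos (2 * τ * L)
        + 2 * sfn τ * Efn L τ * (-Real.sin (2 * τ * L) * (2 * L)))|
      ≤ 2 * Efn L τ * (1 * (3 * L)) * (5 * τ) + Efn L τ * (6 + 5 * τ * L)
        + ((6 * Efn L τ + 12 * τ * L * Efn L τ) * 1 + 2 * (2 * τ) * Efn L τ * (1 * (2 * L))) := by
    refine (abs_sub _ _).trans ?_
    have := abs_add_le ((2:ℕ) * Efn L τ ^ (2 - 1) * (Efn L τ * -(3 * τ / sfn τ * L))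
        * (sfn τ * Real.cos (τ * L) - 3 * τ * Real.sin (τ * L)))
      (Efn L τ ^ 2 * (3 * τ / sfn τ * Real.cos (τ * L) + sfn τ * (-Real.sin (τ * L) * L)
        - (3 * Real.sin (τ * L) + 3 * τ * (Real.cos (τ * L) * L))))
    have := abs_add_le ((2 * (3 * τ / sfn τ) * Efn L τ + 2 * sfn τ * (Efn L τ * -(3 * τ / sfn τ * L)))
          * Real.cos (2 * τ * L))
      (2 * sfn τ * Efn L τ * (-Real.sin (2 * τ * L) * (2 * L)))
    linarith
  refine tri.trans ?_
  have hLτE : L * (τ * Efn L τ) ≤ L * (1 / 9) := mul_le_mul_of_nonneg_left hτE hL.le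
  nlinarith [hE0.le, hτE, hEτE, hLτE, mul_pos hL hE0]

lemma hsmall_bound {L τ : ℝ} (hL : 0 < L) (hτ : 1 ≤ τ) (hτ48 : 48 / L ^ 2 ≤ τ) :
    |dfn L τ + rfn L τ| ≤ 2 / τ := by
  have h1 := d_bound (L := L) hτ
  have h2 := r_bound hL hτ hτ48
  have h3 : 1 / (2 * τ) + 1 / τ ≤ 2 / τ := by
    rw [div_add_div _ _ (by positivity) (by positivity), div_le_div_iff₀ (by positivity) (by positivity)]
    ring_nf; nlinarith
  calc |dfn L τ + rfn L τ| ≤ |dfn L τ| + |rfn L τ| := abs_add_le _ _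
    _ ≤ 2 / τ := by linarith

lemma Gcont {L : ℝ} : Continuous (Gfn L) := by
  unfold Gfn Efn sfn
  fun_prop

lemma loc {L : ℝ} (hL : 0 < L) {j : ℕ} {τ : ℝ} (hT3 : 3 ≤ τ) (hτ48 : 48 / L ^ 2 ≤ τ)
    (hlo : (j : ℝ) * π / L ≤ τ) (hhi : τ < ((j : ℝ) + 1) * π / L) (hroot : Gfn L τ = 0) :
    |τ - ((j : ℝ) * π / L + 5 * π / (6 * L))| ≤ π / (2 * L * τ ^ 2) := by
  have hτ1 : (1:ℝ) ≤ τ := by linarith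
  have hπ := Real.pi_pos
  have hπ3 := Real.pi_gt_three
  have hsmall := hsmall_bound hL hτ1 hτ48
  obtain ⟨u, hu⟩ : ∃ u : ℝ, u = τ * L + π / 6 - ((j : ℝ) + 1) * π := ⟨_, rfl⟩
  have hθ : τ * L + π / 6 = u + ((j + 1 : ℕ) : ℝ) * π := by rw [hu]; push_cast; ring
  have hsin_eq : |Real.sin (τ * L + π / 6)| = |Real.sin u| := by
    rw [hθ, Real.sin_add_nat_mul_pi, abs_mul, abs_pow, abs_neg, abs_one, one_pow, one_mul]
  -- from the root equation
  have hGd := G_decomp (L := L) hτ1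
  have hmain : 2 * Real.sqrt 3 * τ * Real.sin (τ * L + π / 6) = -(dfn L τ + rfn L τ) := by
    rw [hroot] at hGd; linarith
  have hsin_small : |Real.sin u| ≤ 1 / τ ^ 2 := by
    have h1 : |2 * Real.sqrt 3 * τ * Real.sin (τ * L + π / 6)| ≤ 2 / τ := by
      rw [hmain, abs_neg]; exact hsmall
    have h2 : 2 * τ * |Real.sin (τ * L + π / 6)| ≤ |2 * Real.sqrt 3 * τ * Real.sin (τ * L + π / 6)| := by
      rw [abs_mul, abs_mul, abs_mul, abs_two, abs_of_nonneg (by linarith [sqrt3_lb] : (0:ℝ) ≤ Real.sqrt 3),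
        abs_of_nonneg (by linarith : (0:ℝ) ≤ τ)]
      nlinarith [mul_nonneg (mul_nonneg (by linarith [sqrt3_lb] : (0:ℝ) ≤ Real.sqrt 3 - 1)
        (by linarith : (0:ℝ) ≤ 2 * τ)) (abs_nonneg (Real.sin (τ * L + π / 6)))]
    rw [← hsin_eq]
    have h3 : 2 * τ * |Real.sin (τ * L + π / 6)| ≤ 2 / τ := le_trans h2 h1
    rw [le_div_iff₀ (by positivity)]
    have h4 : 2 / τ * τ = 2 := by field_simp
    nlinarith [mul_le_mul_of_nonneg_right h3 (by linarith : (0:ℝ) ≤ τ),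
      abs_nonneg (Real.sin (τ * L + π / 6))]
  -- range of u
  have hulo : -(5 * π / 6) ≤ u := by
    have : (j : ℝ) * π ≤ τ * L := by
      rw [div_le_iff₀ hL] at hlo; linarith
    rw [hu]; linarith
  have huhi : u < π / 6 := by
    have : τ * L < ((j : ℝ) + 1) * π := by
      rw [lt_div_iff₀ hL] at hhi; linarith
    rw [hu]; linarith
  -- |u| ≤ π/2
  have hu2 : |u| ≤ π / 2 := by
    by_contra hcon
    push_neg at hcon
    have hneg : u < -(π / 2) := by
      rcases abs_cases u with ⟨h, _⟩ | ⟨h, _⟩ <;> linarith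
    have hmem1 : π + u ∈ Set.Icc (-(π/2)) (π/2) := by
      constructor <;> linarith
    have hmem2 : π / 6 ∈ Set.Icc (-(π/2)) (π/2) := by
      constructor <;> linarith
    have hmono := Real.strictMonoOn_sin.monotoneOn hmem2 hmem1 (by linarith)
    rw [Real.sin_pi_div_six] at hmono
    have hs : Real.sin (π + u) = -Real.sin u := by
      rw [add_comm]; exact Real.sin_add_pi u
    rw [hs] at hmono
    have hna : -Real.sin u ≤ |Real.sin u| := neg_le_abs _
    have h19 : 1 / τ ^ 2 ≤ 1 / 9 := by
      rw [div_le_div_iff₀ (by positivity) (by norm_num)]; nlinarith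
    linarith
  -- Jordan bound
  have habs_sin : |Real.sin u| = Real.sin |u| := by
    rcases le_or_gt 0 u with h | h
    · rw [abs_of_nonneg h, abs_of_nonneg (Real.sin_nonneg_of_nonneg_of_le_pi h (by linarith))]
    · rw [abs_of_neg h, Real.sin_neg]
      exact abs_of_nonpos (by
        nlinarith [Real.sin_nonneg_of_nonneg_of_le_pi (show (0:ℝ) ≤ -u by linarith)
          (show -u ≤ π by
            rcases abs_cases u with ⟨h1, _⟩ | ⟨h1, _⟩ <;> linarith), Real.sin_neg u])
  have hjordan : 2 / π * |u| ≤ Real.sin |u| := Real.mul_le_sin (abs_nonneg _) hu2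
  have huτ : |u| ≤ π / (2 * τ ^ 2) := by
    rw [habs_sin] at hsin_small
    rw [le_div_iff₀ (by positivity)]
    have h5 : 2 / π * |u| * (π * τ ^ 2) ≤ 1 / τ ^ 2 * (π * τ ^ 2) :=
      mul_le_mul_of_nonneg_right (le_trans hjordan hsin_small) (by positivity)
    have e1 : 2 / π * |u| * (π * τ ^ 2) = |u| * (2 * τ ^ 2) := by field_simp
    have e2 : 1 / τ ^ 2 * (π * τ ^ 2) = π := by field_simp
    linarith
  have heq : τ - ((j : ℝ) * π / L + 5 * π / (6 * L)) = u / L := by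
    rw [hu]; field_simp; ring
  rw [heq, abs_div, abs_of_pos hL, div_le_div_iff₀ hL (by positivity)]
  rw [le_div_iff₀ (by positivity)] at huτ
  nlinarith [mul_le_mul_of_nonneg_left huτ hL.le]

lemma Gderiv {L τ : ℝ} (hL : 0 < L) (hτ : 2 ≤ τ) (hτ48 : 48 / L ^ 2 ≤ τ) :
    ∃ D : ℝ, HasDerivAt (Gfn L) D τ ∧
      |D - (2 * Real.sqrt 3 * Real.sin (τ * L + π / 6)
        + 2 * Real.sqrt 3 * τ * (Real.cos (τ * L + π / 6) * L))| ≤ 20 * (1 + L) := by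
  obtain ⟨Dr, hDr, hDrb⟩ := rderiv hL (by linarith) hτ48
  have hDd := hasDerivAt_dfn (L := L) (τ := τ) (by linarith)
  have hDm := hasDerivAt_main (L := L) (τ := τ)
  have hsum := hDm.add (hDd.add hDr)
  have hev : Gfn L =ᶠ[nhds τ]
      fun x => 2 * Real.sqrt 3 * x * Real.sin (x * L + π / 6) + (dfn L x + rfn L x) := by
    filter_upwards [Ioi_mem_nhds (show (1:ℝ) < τ by linarith)] with x hx
    exact G_decomp hx.le
  refine ⟨_, hsum.congr_of_eventuallyEq hev, ?_⟩
  have heq : 2 * Real.sqrt 3 * Real.sin (τ * L + π / 6)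
        + 2 * Real.sqrt 3 * τ * (Real.cos (τ * L + π / 6) * L)
        + ((Real.sin (τ * L) * L * (sfn τ + Real.sqrt 3 * τ)
          + Real.cos (τ * L) * (3 * τ / sfn τ + Real.sqrt 3)) / (sfn τ + Real.sqrt 3 * τ) ^ 2 + Dr)
        - (2 * Real.sqrt 3 * Real.sin (τ * L + π / 6)
          + 2 * Real.sqrt 3 * τ * (Real.cos (τ * L + π / 6) * L))
      = (Real.sin (τ * L) * L * (sfn τ + Real.sqrt 3 * τ)
          + Real.cos (τ * L) * (3 * τ / sfn τ + Real.sqrt 3)) / (sfn τ + Real.sqrt 3 * τ) ^ 2 + Dr := by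
    ring
  rw [heq]
  have := dderiv_bound (τ := τ) hL (by linarith)
  calc |_ + Dr| ≤ _ + |Dr| := abs_add_le _ _
    _ ≤ 20 * (1 + L) := by linarith

lemma mono_lemma {L : ℝ} (hL : 0 < L) {j : ℕ} {a b : ℝ}
    (hπ : 0 < π)
    (hva : a * L + π / 6 = -(π/12) + ((j + 1 : ℕ) : ℝ) * π)
    (hvb : b * L + π / 6 = π/12 + ((j + 1 : ℕ) : ℝ) * π)
    (hσ2 : ((-1:ℝ)) ^ (j+1) * ((-1:ℝ)) ^ (j+1) = 1)
    (hσabs : |((-1:ℝ)) ^ (j+1)| = 1)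
    (hfacts : ∀ x : ℝ, a ≤ x → 3 ≤ x ∧ 48 / L ^ 2 ≤ x ∧ (25 + 20 * L) / L ≤ x) :
    StrictMonoOn (fun x => ((-1:ℝ)) ^ (j+1) * Gfn L x) (Set.Icc a b) := by
  apply strictMonoOn_of_deriv_pos (convex_Icc a b)
    ((continuous_const.mul Gcont).continuousOn)
  intro x hx
  rw [interior_Icc] at hx
  obtain ⟨hx3, hx48, hx25⟩ := hfacts x hx.1.le
  obtain ⟨D, hD, hDb⟩ := Gderiv hL (by linarith) hx48
  have hF : HasDerivAt (fun y => ((-1:ℝ)) ^ (j+1) * Gfn L y) (((-1:ℝ)) ^ (j+1) * D) x :=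
    hD.const_mul _
  rw [show ((fun _ => ((-1:ℝ)) ^ (j+1)) * Gfn L) = (fun y => ((-1:ℝ)) ^ (j+1) * Gfn L y) from rfl, hF.deriv]
  obtain ⟨v, hv⟩ : ∃ v : ℝ, v = x * L + π / 6 - ((j : ℝ) + 1) * π := ⟨_, rfl⟩
  have hθv : x * L + π / 6 = v + ((j + 1 : ℕ) : ℝ) * π := by rw [hv]; push_cast; ring
  have hvlo : -(π/12) ≤ v := by
    have h1 : a * L ≤ x * L := mul_le_mul_of_nonneg_right hx.1.le hL.le
    have h2 := hva
    rw [hv]; push_cast at h2 ⊢; linarith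
  have hvhi : v ≤ π/12 := by
    have h1 : x * L ≤ b * L := mul_le_mul_of_nonneg_right hx.2.le hL.le
    have h2 := hvb
    rw [hv]; push_cast at h2 ⊢; linarith
  have hcosv : 1/2 ≤ Real.cos v := by
    rw [← Real.cos_abs]
    have h1 : |v| ≤ π/3 := by
      rw [abs_le]; constructor <;> linarith
    have h2 := Real.cos_le_cos_of_nonneg_of_le_pi (abs_nonneg v) (by linarith : π/3 ≤ π) h1
    rw [Real.cos_pi_div_three] at h2
    exact h2
  have hcosθ : Real.cos (x * L + π / 6) = ((-1:ℝ)) ^ (j+1) * Real.cos v := by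
    rw [hθv, Real.cos_add_nat_mul_pi]
  have hsplit : ((-1:ℝ)) ^ (j+1) * D
      = ((-1:ℝ)) ^ (j+1) * (D - (2 * Real.sqrt 3 * Real.sin (x * L + π / 6)
          + 2 * Real.sqrt 3 * x * (Real.cos (x * L + π / 6) * L)))
        + ((-1:ℝ)) ^ (j+1) * (2 * Real.sqrt 3 * Real.sin (x * L + π / 6))
        + 2 * Real.sqrt 3 * x * L * (((-1:ℝ)) ^ (j+1) * Real.cos (x * L + π / 6)) := by
    ring
  have hb1' : |((-1:ℝ)) ^ (j+1) * (D - (2 * Real.sqrt 3 * Real.sin (x * L + π / 6)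
      + 2 * Real.sqrt 3 * x * (Real.cos (x * L + π / 6) * L)))| ≤ 20 * (1 + L) := by
    rw [abs_mul, hσabs, one_mul]; exact hDb
  have hb1 := (abs_le.mp hb1').1
  have hb2' : |((-1:ℝ)) ^ (j+1) * (2 * Real.sqrt 3 * Real.sin (x * L + π / 6))|
      ≤ 2 * Real.sqrt 3 := by
    rw [abs_mul, hσabs, one_mul, abs_mul, abs_mul, abs_two,
      abs_of_nonneg (by linarith [sqrt3_lb] : (0:ℝ) ≤ Real.sqrt 3)]
    nlinarith [mul_le_mul_of_nonneg_left (abs_sin_le_one (x * L + π / 6))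
      (show (0:ℝ) ≤ 2 * Real.sqrt 3 by linarith [sqrt3_lb]),
      abs_nonneg (Real.sin (x * L + π / 6))]
  have hb2 := (abs_le.mp hb2').1
  have hb3 : x * L ≤ 2 * Real.sqrt 3 * x * L
      * (((-1:ℝ)) ^ (j+1) * Real.cos (x * L + π / 6)) := by
    rw [hcosθ, show ((-1:ℝ)) ^ (j+1) * (((-1:ℝ)) ^ (j+1) * Real.cos v)
      = (((-1:ℝ)) ^ (j+1) * ((-1:ℝ)) ^ (j+1)) * Real.cos v by ring, hσ2, one_mul]
    have hxL : 0 ≤ x * L := by positivity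
    have hcv0 : (0:ℝ) ≤ Real.cos v := by linarith
    nlinarith [mul_le_mul_of_nonneg_left hcosv hxL,
      mul_nonneg (show (0:ℝ) ≤ Real.sqrt 3 - 1 by linarith [sqrt3_lb])
        (mul_nonneg hxL hcv0)]
  have hxL25 : 25 + 20 * L ≤ x * L := by
    rw [div_le_iff₀ hL] at hx25; linarith [mul_comm x L]
  have hs3 := sqrt3_ub
  rw [hsplit]
  linarith [hb1, hb2, hb3, hxL25]

/-- For `j` large, the characteristic equation has exactly one root `τ_j` in
`[jπ/L, (j+1)π/L)`, and `τ_j = jπ/L + 5π/(6L) + O(1/j)`. -/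
theorem stmt_0 (L : ℝ) (hL : 0 < L) :
    ∃ (J : ℕ) (C : ℝ), 0 < J ∧ 0 < C ∧
      ∀ j : ℕ, J ≤ j →
        ∃ τ : ℝ,
          (τ ∈ Set.Ico ((j : ℝ) * Real.pi / L) (((j : ℝ) + 1) * Real.pi / L) ∧
            Real.sqrt (3 * τ ^ 2 - 1) * Real.cos (2 * τ * L)
              - 3 * τ * Real.sin (τ * L) * Real.sinh (Real.sqrt (3 * τ ^ 2 - 1) * L)
              - Real.sqrt (3 * τ ^ 2 - 1) * Real.cos (τ * L)
                  * Real.cosh (Real.sqrt (3 * τ ^ 2 - 1) * L) = 0) ∧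
          |τ - (j : ℝ) * Real.pi / L - 5 * Real.pi / (6 * L)| ≤ C / (j : ℝ) ∧
          ∀ τ' : ℝ,
            (τ' ∈ Set.Ico ((j : ℝ) * Real.pi / L) (((j : ℝ) + 1) * Real.pi / L) ∧
              Real.sqrt (3 * τ' ^ 2 - 1) * Real.cos (2 * τ' * L)
                - 3 * τ' * Real.sin (τ' * L) * Real.sinh (Real.sqrt (3 * τ' ^ 2 - 1) * L)
                - Real.sqrt (3 * τ' ^ 2 - 1) * Real.cos (τ' * L)
                    * Real.cosh (Real.sqrt (3 * τ' ^ 2 - 1) * L) = 0) →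
            τ' = τ := by
  have hπ := Real.pi_pos
  have hπ3 := Real.pi_gt_three
  obtain ⟨T, hT⟩ : ∃ T : ℝ, T = max 3 (max (48 / L ^ 2) ((25 + 20 * L) / L)) := ⟨_, rfl⟩
  have hT0 : 0 < T := by rw [hT]; exact lt_of_lt_of_le (by norm_num) (le_max_left _ _)
  refine ⟨⌈T * L / π + L⌉₊ + 1, L, Nat.succ_pos _, hL, ?_⟩
  intro j hj
  -- basic facts about j
  have hjR : T * L / π + L ≤ (j : ℝ) := by
    calc T * L / π + L ≤ (⌈T * L / π + L⌉₊ : ℝ) := Nat.le_ceil _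
      _ ≤ (j : ℝ) := by exact_mod_cast Nat.le_of_succ_le hj
  have hjL : L ≤ (j : ℝ) := by
    have : 0 ≤ T * L / π := by positivity
    linarith
  have hj0 : (0:ℝ) < j := lt_of_lt_of_le hL hjL
  have hTj : T ≤ (j : ℝ) * π / L := by
    rw [le_div_iff₀ hL]
    have h1 : T * L / π + L ≤ (j:ℝ) := hjR
    have h2 : (T * L / π) * π ≤ (j:ℝ) * π := by
      apply mul_le_mul_of_nonneg_right _ hπ.le
      linarith
    rw [div_mul_cancel₀ _ (ne_of_gt hπ)] at h2
    linarith
  -- interval endpoints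
  obtain ⟨x0, hx0⟩ : ∃ x0 : ℝ, x0 = (j : ℝ) * π / L := ⟨_, rfl⟩
  obtain ⟨a, ha⟩ : ∃ a : ℝ, a = x0 + 3 * π / (4 * L) := ⟨_, rfl⟩
  obtain ⟨b, hb⟩ : ∃ b : ℝ, b = x0 + 11 * π / (12 * L) := ⟨_, rfl⟩
  have hx0T : T ≤ x0 := by rw [hx0]; exact hTj
  have hT3 : (3:ℝ) ≤ T := by rw [hT]; exact le_max_left _ _
  have hT48 : 48 / L ^ 2 ≤ T := by rw [hT]; exact le_trans (le_max_left _ _) (le_max_right _ _)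
  have hT25 : (25 + 20 * L) / L ≤ T := by
    rw [hT]; exact le_trans (le_max_right _ _) (le_max_right _ _)
  have hab : a ≤ b := by
    rw [ha, hb]
    have : 3 * π / (4 * L) ≤ 11 * π / (12 * L) := by
      rw [div_le_div_iff₀ (by positivity) (by positivity)]; nlinarith
    linarith
  have hax0 : x0 < a := by
    rw [ha]; nlinarith [div_pos (by positivity : (0:ℝ) < 3 * π) (by positivity : (0:ℝ) < 4 * L)]
  have hbhi : b < ((j : ℝ) + 1) * π / L := by
    rw [hb, hx0]
    rw [show ((j:ℝ) + 1) * π / L = (j:ℝ) * π / L + π / L by field_simp]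
    have : 11 * π / (12 * L) < π / L := by
      rw [div_lt_div_iff₀ (by positivity) (by positivity)]; nlinarith
    linarith
  -- facts for all points ≥ a
  have hx_facts : ∀ x : ℝ, a ≤ x → 3 ≤ x ∧ 48 / L ^ 2 ≤ x ∧ (25 + 20 * L) / L ≤ x := by
    intro x hx
    have : T ≤ x := by linarith [hax0.le]
    exact ⟨by linarith, by linarith, by linarith⟩
  -- sign factor
  have hσ2 : ((-1:ℝ)) ^ (j+1) * ((-1:ℝ)) ^ (j+1) = 1 := by
    rw [← pow_add]
    exact Even.neg_one_pow ⟨j + 1, by ring⟩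
  have hσabs : |((-1:ℝ)) ^ (j+1)| = 1 := by
    rw [abs_pow, abs_neg, abs_one, one_pow]
  have hσne : ((-1:ℝ)) ^ (j+1) ≠ 0 := pow_ne_zero _ (by norm_num)
  -- endpoint angle values
  have hva : a * L + π / 6 = -(π/12) + ((j + 1 : ℕ) : ℝ) * π := by
    rw [ha, hx0]; push_cast; field_simp; ring
  have hvb : b * L + π / 6 = π/12 + ((j + 1 : ℕ) : ℝ) * π := by
    rw [hb, hx0]; push_cast; field_simp; ring
  have hsin12 : 1/6 ≤ Real.sin (π/12) := by
    have h1 := Real.mul_le_sin (x := π/12) (by positivity) (by linarith)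
    have h2 : 2/π * (π/12) = 1/6 := by field_simp; ring
    linarith
  have hsin12' : Real.sin (π/12) ≤ 1 := Real.sin_le_one _
  -- endpoint signs
  have hsmalla : |dfn L a + rfn L a| ≤ 2 / a :=
    hsmall_bound hL (by linarith [(hx_facts a le_rfl).1]) (hx_facts a le_rfl).2.1
  have hsmallb : |dfn L b + rfn L b| ≤ 2 / b :=
    hsmall_bound hL (by linarith [(hx_facts b hab).1]) (hx_facts b hab).2.1
  have ha3 : (3:ℝ) ≤ a := (hx_facts a le_rfl).1
  have hb3 : (3:ℝ) ≤ b := (hx_facts b hab).1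
  have hGa : Gfn L a = 2 * Real.sqrt 3 * a * (((-1:ℝ)) ^ (j+1) * -Real.sin (π/12))
      + (dfn L a + rfn L a) := by
    rw [G_decomp (by linarith : (1:ℝ) ≤ a), hva, Real.sin_add_nat_mul_pi, Real.sin_neg]
  have hGb : Gfn L b = 2 * Real.sqrt 3 * b * (((-1:ℝ)) ^ (j+1) * Real.sin (π/12))
      + (dfn L b + rfn L b) := by
    rw [G_decomp (by linarith : (1:ℝ) ≤ b), hvb, Real.sin_add_nat_mul_pi]
  have hFa : ((-1:ℝ)) ^ (j+1) * Gfn L a < 0 := by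
    rw [hGa]
    have h1 : ((-1:ℝ)) ^ (j+1) * (2 * Real.sqrt 3 * a * (((-1:ℝ)) ^ (j+1) * -Real.sin (π/12)))
        = -(2 * Real.sqrt 3 * a * Real.sin (π/12)) := by
      rw [show ((-1:ℝ)) ^ (j+1) * (2 * Real.sqrt 3 * a * (((-1:ℝ)) ^ (j+1) * -Real.sin (π/12)))
        = (((-1:ℝ)) ^ (j+1) * ((-1:ℝ)) ^ (j+1)) * (2 * Real.sqrt 3 * a * -Real.sin (π/12)) by ring,
        hσ2]
      ring
    have h2 : |((-1:ℝ)) ^ (j+1) * (dfn L a + rfn L a)| ≤ 2 / a := by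
      rw [abs_mul, hσabs, one_mul]; exact hsmalla
    have h3 : ((-1:ℝ)) ^ (j+1) * (dfn L a + rfn L a) ≤ 2 / a := (le_abs_self _).trans h2
    have h4 : 2 / a < 2 * Real.sqrt 3 * a * Real.sin (π/12) := by
      have h5 : a / 3 ≤ 2 * Real.sqrt 3 * a * Real.sin (π/12) := by
        nlinarith [mul_le_mul_of_nonneg_left hsin12 (show (0:ℝ) ≤ a by linarith),
          mul_nonneg (show (0:ℝ) ≤ Real.sqrt 3 - 1 by linarith [sqrt3_lb])
            (mul_nonneg (show (0:ℝ) ≤ a by linarith) (show (0:ℝ) ≤ Real.sin (π/12) by linarith))]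
      have h6 : 2 / a < a / 3 := by
        rw [div_lt_div_iff₀ (by linarith) (by norm_num)]; nlinarith
      linarith
    calc ((-1:ℝ)) ^ (j+1) * (2 * Real.sqrt 3 * a * (((-1:ℝ)) ^ (j+1) * -Real.sin (π/12))
          + (dfn L a + rfn L a))
        = -(2 * Real.sqrt 3 * a * Real.sin (π/12)) + ((-1:ℝ)) ^ (j+1) * (dfn L a + rfn L a) := by
          rw [← h1]; ring
      _ < 0 := by linarith
  have hFb : 0 < ((-1:ℝ)) ^ (j+1) * Gfn L b := by
    rw [hGb]
    have h1 : ((-1:ℝ)) ^ (j+1) * (2 * Real.sqrt 3 * b * (((-1:ℝ)) ^ (j+1) * Real.sin (π/12)))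
        = 2 * Real.sqrt 3 * b * Real.sin (π/12) := by
      rw [show ((-1:ℝ)) ^ (j+1) * (2 * Real.sqrt 3 * b * (((-1:ℝ)) ^ (j+1) * Real.sin (π/12)))
        = (((-1:ℝ)) ^ (j+1) * ((-1:ℝ)) ^ (j+1)) * (2 * Real.sqrt 3 * b * Real.sin (π/12)) by ring,
        hσ2]
      ring
    have h2 : |((-1:ℝ)) ^ (j+1) * (dfn L b + rfn L b)| ≤ 2 / b := by
      rw [abs_mul, hσabs, one_mul]; exact hsmallb
    have h3 : -(2 / b) ≤ ((-1:ℝ)) ^ (j+1) * (dfn L b + rfn L b) := (abs_le.mp h2).1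
    have h4 : 2 / b < 2 * Real.sqrt 3 * b * Real.sin (π/12) := by
      have h5 : b / 3 ≤ 2 * Real.sqrt 3 * b * Real.sin (π/12) := by
        nlinarith [mul_le_mul_of_nonneg_left hsin12 (show (0:ℝ) ≤ b by linarith),
          mul_nonneg (show (0:ℝ) ≤ Real.sqrt 3 - 1 by linarith [sqrt3_lb])
            (mul_nonneg (show (0:ℝ) ≤ b by linarith) (show (0:ℝ) ≤ Real.sin (π/12) by linarith))]
      have h6 : 2 / b < b / 3 := by
        rw [div_lt_div_iff₀ (by linarith) (by norm_num)]; nlinarith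
      linarith
    calc (0:ℝ) < 2 * Real.sqrt 3 * b * Real.sin (π/12) - 2 / b := by linarith
      _ ≤ ((-1:ℝ)) ^ (j+1) * (2 * Real.sqrt 3 * b * (((-1:ℝ)) ^ (j+1) * Real.sin (π/12))
          + (dfn L b + rfn L b)) := by
          rw [show ((-1:ℝ)) ^ (j+1) * (2 * Real.sqrt 3 * b * (((-1:ℝ)) ^ (j+1) * Real.sin (π/12))
            + (dfn L b + rfn L b)) = ((-1:ℝ)) ^ (j+1) * (2 * Real.sqrt 3 * b
            * (((-1:ℝ)) ^ (j+1) * Real.sin (π/12))) + ((-1:ℝ)) ^ (j+1) * (dfn L b + rfn L b) by ring,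
            h1]
          linarith
  -- strict monotonicity on [a, b]
  have hmono := mono_lemma hL hπ hva hvb hσ2 hσabs hx_facts
  -- IVT: existence of the root
  have hIoo := intermediate_value_Ioo (f := fun x => ((-1:ℝ)) ^ (j+1) * Gfn L x) hab
    ((continuous_const.mul Gcont).continuousOn)
  have h0mem : (0:ℝ) ∈ Set.Ioo (((-1:ℝ)) ^ (j+1) * Gfn L a) (((-1:ℝ)) ^ (j+1) * Gfn L b) :=
    ⟨hFa, hFb⟩
  obtain ⟨τ, hτab, hτF⟩ := hIoo h0mem
  have hroot : Gfn L τ = 0 := by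
    rcases mul_eq_zero.mp hτF with h | h
    · exact absurd h hσne
    · exact h
  have hτlo : (j : ℝ) * π / L ≤ τ := by
    rw [← hx0]; linarith [hτab.1, hax0]
  have hτhi : τ < ((j : ℝ) + 1) * π / L := lt_trans hτab.2 hbhi
  obtain ⟨hτ3, hτ48, hτ25⟩ := hx_facts τ hτab.1.le
  have hlocτ := loc hL hτ3 hτ48 hτlo hτhi hroot
  -- the error bound
  have herr : |τ - (j : ℝ) * π / L - 5 * π / (6 * L)| ≤ L / (j : ℝ) := by
    rw [sub_sub]
    refine hlocτ.trans ?_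
    have hτpos : (0:ℝ) < τ := by linarith
    have hx0pos : (0:ℝ) < x0 := by rw [hx0]; positivity
    have hsq : ((j:ℝ) * π / L) ^ 2 ≤ τ ^ 2 := by
      apply pow_le_pow_left₀ (le_of_lt _) hτlo
      rw [← hx0]; exact hx0pos
    rw [div_le_div_iff₀ (by positivity) hj0]
    have hj1 : (1:ℝ) ≤ (j:ℝ) := by
      have : 1 ≤ j := le_trans (Nat.succ_le_succ (Nat.zero_le _)) hj
      exact_mod_cast this
    have hexp : ((j:ℝ) * π / L) ^ 2 = (j:ℝ)^2 * π^2 / L^2 := by ring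
    have h1 : (j:ℝ)^2 * π^2 / L^2 ≤ τ^2 := by rw [← hexp]; exact hsq
    rw [div_le_iff₀ (by positivity)] at h1
    have hjπ : (1:ℝ) ≤ (j:ℝ) * π := by
      have h2 := mul_le_mul_of_nonneg_right hj1 hπ.le
      linarith only [h2, hπ3]
    nlinarith only [h1, mul_le_mul_of_nonneg_left hjπ
      (show (0:ℝ) ≤ (j:ℝ) * π by positivity), sq_nonneg (τ * L)]
  refine ⟨τ, ⟨⟨hτlo, hτhi⟩, by rw [g_eq L τ, hroot, mul_zero]⟩, herr, ?_⟩
  -- uniqueness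
  rintro τ' ⟨⟨hlo', hhi'⟩, hg'⟩
  have hτ'x0 : x0 ≤ τ' := by rw [hx0]; exact hlo'
  have hτ'T : T ≤ τ' := le_trans hx0T hτ'x0
  have hroot' : Gfn L τ' = 0 := by
    rw [g_eq L τ'] at hg'
    rcases mul_eq_zero.mp hg' with h | h
    · exfalso
      have he := Real.exp_pos (sfn τ' * L)
      linarith only [he, h]
    · exact h
  have hτ'3 : (3:ℝ) ≤ τ' := by linarith only [hτ'T, hT3]
  have hτ'sq : (0:ℝ) < τ' ^ 2 := by nlinarith only [hτ'3]
  have hlocτ' := loc hL hτ'3 (by linarith only [hτ'T, hT48]) hlo' hhi' hroot'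
  have hτ'win : |τ' - ((j : ℝ) * π / L + 5 * π / (6 * L))| ≤ π / (12 * L) := by
    refine hlocτ'.trans ?_
    rw [div_le_div_iff₀ (by nlinarith only [mul_pos hL hτ'sq]) (by positivity)]
    have h9 : (9:ℝ) ≤ τ' ^ 2 := by nlinarith only [hτ'3]
    nlinarith only [mul_pos hπ hL, h9]
  have hτ'ab : τ' ∈ Set.Icc a b := by
    obtain ⟨h1, h2⟩ := abs_le.mp hτ'win
    have hae : a = ((j : ℝ) * π / L + 5 * π / (6 * L)) - π / (12 * L) := by
      rw [ha, hx0]; field_simp; ring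
    have hbe : b = ((j : ℝ) * π / L + 5 * π / (6 * L)) + π / (12 * L) := by
      rw [hb, hx0]; field_simp; ring
    constructor
    · rw [hae]; linarith
    · rw [hbe]; linarith
  have hτab' : τ ∈ Set.Icc a b := ⟨hτab.1.le, hτab.2.le⟩
  apply hmono.injOn hτ'ab hτab'
  show ((-1:ℝ)) ^ (j+1) * Gfn L τ' = ((-1:ℝ)) ^ (j+1) * Gfn L τ
  rw [hroot, hroot']
end

section
/- Let L>0 and τ∈ℝ with 3τ²>1. Set s=√(3τ²−1) and μ=2τ(4τ²−1), and assume the characteristic equation s·cos(2τL) − 3τ·sin(τL)·sinh(sL) − s·cos(τL)·cosh(sL) = 0 holds. Define φ:ℝ→ℂ by φ(x) = e^{−iτx}·[cosh(sx) + ((e^{3iτL} − cosh(sL))/sinh(sL))·sinh(sx)] − e^{2iτx}. Then φ is not identically zero on [0,L], φ(0)=0, φ(L)=0, φ'(0)=φ'(L), and φ'''(x) + φ'(x) + iμ·φ(x) = 0 for all x∈ℝ. -/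
lemma hasDerivAt_cexp_mul (c : ℂ) (x : ℝ) :
    HasDerivAt (fun x : ℝ => Complex.exp (c * x)) (c * Complex.exp (c * x)) x := by
  have h1 : HasDerivAt (fun x : ℝ => (x : ℂ)) 1 x := by
    exact Complex.ofRealCLM.hasDerivAt
  have h2 : HasDerivAt (fun x : ℝ => c * (x : ℂ)) c x := by
    simpa using h1.const_mul c
  simpa [mul_comm] using h2.cexp

lemma hasDerivAt_triple (a b c r1 r2 r3 : ℂ) (x : ℝ) :
    HasDerivAt (fun x : ℝ => a * Complex.exp (r1 * x) + b * Complex.exp (r2 * x)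
        - c * Complex.exp (r3 * x))
      (a * r1 * Complex.exp (r1 * x) + b * r2 * Complex.exp (r2 * x)
        - c * r3 * Complex.exp (r3 * x)) x := by
  have h1 := ((hasDerivAt_cexp_mul r1 x).const_mul a).add ((hasDerivAt_cexp_mul r2 x).const_mul b)
  have h2 := h1.sub ((hasDerivAt_cexp_mul r3 x).const_mul c)
  refine h2.congr_deriv ?_
  ring

/-- Under the characteristic equation, `φ` is a nonzero eigenfunction of
`A φ = -φ''' - φ'` with the boundary conditions `φ(0)=φ(L)=0`, `φ'(0)=φ'(L)`,
for the eigenvalue `iμ`, `μ = 2τ(4τ²-1)`. -/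
theorem stmt_1 (L τ : ℝ) (hL : 0 < L) (hτ : 1 < 3 * τ ^ 2)
    (s μ : ℝ) (hs : s = Real.sqrt (3 * τ ^ 2 - 1))
    (hμ : μ = 2 * τ * (4 * τ ^ 2 - 1))
    (hchar : s * Real.cos (2 * τ * L) - 3 * τ * Real.sin (τ * L) * Real.sinh (s * L)
      - s * Real.cos (τ * L) * Real.cosh (s * L) = 0)
    (φ : ℝ → ℂ)
    (hφ : ∀ x : ℝ, φ x =
      Complex.exp (-Complex.I * τ * x) *
        (Complex.cosh ((s * x : ℝ)) +
          ((Complex.exp (3 * Complex.I * τ * L) - Complex.cosh ((s * L : ℝ))) /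
              Complex.sinh ((s * L : ℝ))) * Complex.sinh ((s * x : ℝ))) -
      Complex.exp (2 * Complex.I * τ * x)) :
    (∃ x ∈ Set.Icc (0 : ℝ) L, φ x ≠ 0) ∧
    φ 0 = 0 ∧ φ L = 0 ∧ deriv φ 0 = deriv φ L ∧
    ∀ x : ℝ, iteratedDeriv 3 φ x + deriv φ x + Complex.I * μ * φ x = 0 := by
  have hτ2 : 0 < 3 * τ ^ 2 - 1 := by linarith
  have hτ0 : τ ≠ 0 := by
    intro h; rw [h] at hτ; norm_num at hτ
  have hs0 : 0 < s := hs ▸ Real.sqrt_pos.mpr hτ2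
  have hs2 : s ^ 2 = 3 * τ ^ 2 - 1 := by rw [hs, Real.sq_sqrt hτ2.le]
  have hsL : 0 < s * L := mul_pos hs0 hL
  have hshR : Real.sinh (s * L) ≠ 0 := ne_of_gt (Real.sinh_pos_iff.mpr hsL)
  have hsh : Complex.sinh ((s * L : ℝ) : ℂ) ≠ 0 := by
    rw [← Complex.ofReal_sinh]; exact_mod_cast hshR
  set E : ℂ := Complex.exp (3 * Complex.I * τ * L) with hE
  set C : ℂ := (E - Complex.cosh ((s * L : ℝ) : ℂ)) / Complex.sinh ((s * L : ℝ) : ℂ) with hC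
  have hCsh : C * Complex.sinh ((s * L : ℝ) : ℂ) = E - Complex.cosh ((s * L : ℝ) : ℂ) :=
    div_mul_cancel₀ _ hsh
  set r1 : ℂ := (s : ℂ) - Complex.I * τ with hr1
  set r2 : ℂ := -(s : ℂ) - Complex.I * τ with hr2
  set r3 : ℂ := 2 * Complex.I * τ with hr3
  set A : ℂ := (1 + C) / 2 with hA
  set B : ℂ := (1 - C) / 2 with hB
  set F : ℕ → ℝ → ℂ := fun k x =>
    A * r1 ^ k * Complex.exp (r1 * x) + B * r2 ^ k * Complex.exp (r2 * x)
      - r3 ^ k * Complex.exp (r3 * x) with hF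
  -- φ agrees with F 0
  have hψ : φ = F 0 := by
    funext x
    rw [hφ x, hF]
    have e1 : Complex.exp (r1 * (x : ℂ)) =
        Complex.exp (-Complex.I * τ * x) * Complex.exp ((s * x : ℝ) : ℂ) := by
      rw [← Complex.exp_add]; congr 1; push_cast [hr1]; ring
    have e2 : Complex.exp (r2 * (x : ℂ)) =
        Complex.exp (-Complex.I * τ * x) * Complex.exp (-((s * x : ℝ) : ℂ)) := by
      rw [← Complex.exp_add]; congr 1; push_cast [hr2]; ring
    have e3 : r3 * (x : ℂ) = 2 * Complex.I * τ * x := by rw [hr3]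
    have hco : Complex.cosh ((s * x : ℝ) : ℂ) =
        (Complex.exp ((s * x : ℝ) : ℂ) + Complex.exp (-((s * x : ℝ) : ℂ))) / 2 := rfl
    have hsi : Complex.sinh ((s * x : ℝ) : ℂ) =
        (Complex.exp ((s * x : ℝ) : ℂ) - Complex.exp (-((s * x : ℝ) : ℂ))) / 2 := rfl
    simp only [e1, e2, e3, hco, hsi, hA, hB, pow_zero]
    ring
  -- derivative chain
  have hder : ∀ (k : ℕ) (x : ℝ), HasDerivAt (F k) (F (k + 1) x) x := by
    intro k x
    have h := hasDerivAt_triple (A * r1 ^ k) (B * r2 ^ k) (r3 ^ k) r1 r2 r3 x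
    convert h using 1
    simp only [hF]
    ring
  have hderiv_eq : ∀ k : ℕ, deriv (F k) = F (k + 1) := fun k =>
    funext fun x => (hder k x).deriv
  have hd3 : iteratedDeriv 3 φ = F 3 := by
    rw [hψ, iteratedDeriv_succ, iteratedDeriv_succ, iteratedDeriv_one,
      hderiv_eq 0, hderiv_eq 1, hderiv_eq 2]
  have hd1 : deriv φ = F 1 := by rw [hψ, hderiv_eq 0]
  -- root identities
  have hs2c : (s : ℂ) ^ 2 = 3 * (τ : ℂ) ^ 2 - 1 := by
    exact_mod_cast congrArg (Complex.ofReal) hs2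
  have hμc : (μ : ℂ) = 2 * τ * (4 * (τ : ℂ) ^ 2 - 1) := by push_cast [hμ]; ring
  have hroot1 : r1 ^ 3 + r1 + Complex.I * μ = 0 := by
    rw [hr1]
    linear_combination ((s : ℂ) - 3 * Complex.I * τ) * hs2c + Complex.I * hμc + (3 * (s:ℂ) * τ^2 - Complex.I * τ^3) * Complex.I_sq
  have hroot2 : r2 ^ 3 + r2 + Complex.I * μ = 0 := by
    rw [hr2]
    linear_combination (-(s : ℂ) - 3 * Complex.I * τ) * hs2c + Complex.I * hμc + (-3 * (s:ℂ) * τ^2 - Complex.I * τ^3) * Complex.I_sq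
  have hroot3 : r3 ^ 3 + r3 + Complex.I * μ = 0 := by
    rw [hr3]
    linear_combination Complex.I * hμc + (8 * Complex.I * (τ:ℂ)^3) * Complex.I_sq
  refine ⟨?_, ?_, ?_, ?_, ?_⟩
  · -- φ is not identically zero
    by_contra hcon
    push_neg at hcon
    have key : ∀ x ∈ Set.Icc (0:ℝ) L, C.im * Real.sinh (s*x) = Real.sin (3*τ*x) := by
      intro x hx
      have h0 := hcon x hx
      rw [hφ x, sub_eq_zero] at h0
      have hone : Complex.exp (Complex.I*(τ:ℂ)*(x:ℂ)) * Complex.exp (-Complex.I*(τ:ℂ)*(x:ℂ)) = 1 := by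
        rw [← Complex.exp_add]; simp
      have h1 : ((Real.cosh (s*x) : ℝ) : ℂ) + C * ((Real.sinh (s*x) : ℝ) : ℂ)
          = Complex.exp (((3*τ*x : ℝ) : ℂ) * Complex.I) := by
        rw [Complex.ofReal_cosh, Complex.ofReal_sinh]
        calc Complex.cosh ((s*x:ℝ):ℂ) + C * Complex.sinh ((s*x:ℝ):ℂ)
            = (Complex.exp (Complex.I*(τ:ℂ)*(x:ℂ)) * Complex.exp (-Complex.I*(τ:ℂ)*(x:ℂ))) *
              (Complex.cosh ((s*x:ℝ):ℂ) + C * Complex.sinh ((s*x:ℝ):ℂ)) := by rw [hone, one_mul]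
          _ = Complex.exp (Complex.I*(τ:ℂ)*(x:ℂ)) * (Complex.exp (-Complex.I*(τ:ℂ)*(x:ℂ)) *
              (Complex.cosh ((s*x:ℝ):ℂ) + C * Complex.sinh ((s*x:ℝ):ℂ))) := by ring
          _ = Complex.exp (Complex.I*(τ:ℂ)*(x:ℂ)) * Complex.exp (r3 * (x:ℂ)) := by rw [h0]
          _ = Complex.exp (((3*τ*x : ℝ) : ℂ) * Complex.I) := by
              rw [← Complex.exp_add]; congr 1; rw [hr3]; push_cast; ring
      have h2 := congrArg Complex.im h1
      rw [Complex.exp_ofReal_mul_I_im, Complex.add_im, Complex.ofReal_im, Complex.mul_im,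
        Complex.ofReal_im, Complex.ofReal_re] at h2
      linear_combination h2
    have e1 := key L ⟨hL.le, le_refl L⟩
    have e2 := key (L/2) ⟨by linarith, by linarith⟩
    rw [show s*L = 2*(s*(L/2)) by ring, Real.sinh_two_mul,
      show 3*τ*L = 2*(3*τ*(L/2)) by ring, Real.sin_two_mul] at e1
    have hshp : 0 < Real.sinh (s*(L/2)) := Real.sinh_pos_iff.mpr (by positivity)
    have hchgt : Real.cos (3*τ*(L/2)) < Real.cosh (s*(L/2)) :=
      lt_of_le_of_lt (Real.cos_le_one _) (Real.one_lt_cosh.mpr (by positivity))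
    have h8 : C.im * Real.sinh (s*(L/2)) * (Real.cosh (s*(L/2)) - Real.cos (3*τ*(L/2))) = 0 := by
      linear_combination (1/2) * e1 - Real.cos (3*τ*(L/2)) * e2
    have hb : C.im = 0 := by
      rcases mul_eq_zero.mp h8 with h9 | h9
      · rcases mul_eq_zero.mp h9 with h10 | h10
        · exact h10
        · exact absurd h10 (ne_of_gt hshp)
      · exact absurd h9 (ne_of_gt (sub_pos.mpr hchgt))
    have htabs : 0 < 3 * abs τ := by
      have h := abs_pos.mpr hτ0; linarith
    set x0 := min L (1/(3 * abs τ)) with hx0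
    have hx0p : 0 < x0 := lt_min hL (one_div_pos.mpr htabs)
    have hx0L : x0 ≤ L := min_le_left _ _
    have h9 := key x0 ⟨hx0p.le, hx0L⟩
    rw [hb, zero_mul] at h9
    have hble : 3 * abs τ * x0 ≤ 1 := by
      have hm : x0 ≤ 1/(3 * abs τ) := min_le_right _ _
      have h2 := mul_le_mul_of_nonneg_left hm htabs.le
      have h3 : 3 * abs τ * (1/(3 * abs τ)) = 1 := by field_simp
      nlinarith
    have habs : abs (3*τ*x0) ≤ 1 := by
      have heq : abs (3*τ*x0) = 3 * abs τ * x0 := by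
        rw [abs_mul, abs_of_pos hx0p, abs_mul]
        norm_num
      linarith
    have hpi := Real.pi_gt_three
    obtain ⟨hab1, hab2⟩ := abs_le.mp habs
    have hz := (Real.sin_eq_zero_iff_of_lt_of_lt (by linarith) (by linarith)).mp h9.symm
    exact (mul_ne_zero (mul_ne_zero three_ne_zero hτ0) (ne_of_gt hx0p)) hz
  · -- φ 0 = 0
    rw [hψ, hF]
    simp only [Complex.ofReal_zero, mul_zero, Complex.exp_zero, pow_zero]
    rw [hA, hB]; ring
  · -- φ L = 0
    rw [hφ L]
    have h2 : Complex.cosh ((s * L : ℝ) : ℂ) + C * Complex.sinh ((s * L : ℝ) : ℂ) = E := by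
      rw [hCsh]; ring
    rw [h2, sub_eq_zero, hE, ← Complex.exp_add]
    congr 1; rw [hr3]; ring
  · -- deriv equality
    rw [hd1]
    set u := Complex.exp (Complex.I * (τ:ℂ) * (L:ℂ)) with hu
    set w := Complex.exp (-(Complex.I * (τ:ℂ) * (L:ℂ))) with hw
    have huw : u * w = 1 := by rw [hu, hw, ← Complex.exp_add]; simp
    have hEu : E = u^3 := by
      rw [hE, hu, ← Complex.exp_nat_mul]; congr 1; push_cast; ring
    have hCsh3 : C * Complex.sinh ((s*L:ℝ):ℂ) = u^3 - Complex.cosh ((s*L:ℝ):ℂ) := by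
      rw [hCsh, hEu]
    have hpyth := Complex.cosh_sq_sub_sinh_sq ((s*L:ℝ):ℂ)
    have he1 : Complex.exp (r1 * (L:ℂ)) =
        (Complex.cosh ((s*L:ℝ):ℂ) + Complex.sinh ((s*L:ℝ):ℂ)) * w := by
      rw [Complex.cosh_add_sinh, hw, ← Complex.exp_add]; congr 1; rw [hr1]; push_cast; ring
    have he2 : Complex.exp (r2 * (L:ℂ)) =
        (Complex.cosh ((s*L:ℝ):ℂ) - Complex.sinh ((s*L:ℝ):ℂ)) * w := by
      rw [Complex.cosh_sub_sinh, hw, ← Complex.exp_add]; congr 1; rw [hr2]; push_cast; ring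
    have he3 : Complex.exp (r3 * (L:ℂ)) = u * u := by
      rw [hu, ← Complex.exp_add]; congr 1; rw [hr3]; ring
    have hcc0 : (s:ℂ) * Complex.cos ((2*τ*L:ℝ):ℂ)
        - 3*(τ:ℂ)*Complex.sin ((τ*L:ℝ):ℂ) * Complex.sinh ((s*L:ℝ):ℂ)
        - (s:ℂ)*Complex.cos ((τ*L:ℝ):ℂ)*Complex.cosh ((s*L:ℝ):ℂ) = 0 := by
      rw [← Complex.ofReal_cos, ← Complex.ofReal_sin, ← Complex.ofReal_cos,
        ← Complex.ofReal_sinh, ← Complex.ofReal_cosh]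
      exact_mod_cast hchar
    have e_p1 : u = Complex.cos ((τ*L:ℝ):ℂ) + Complex.sin ((τ*L:ℝ):ℂ) * Complex.I := by
      rw [hu, show Complex.I*(τ:ℂ)*(L:ℂ) = ((τ*L:ℝ):ℂ) * Complex.I by push_cast; ring,
        Complex.exp_mul_I]
    have e_m1 : w = Complex.cos ((τ*L:ℝ):ℂ) - Complex.sin ((τ*L:ℝ):ℂ) * Complex.I := by
      rw [hw, show -(Complex.I*(τ:ℂ)*(L:ℂ)) = ((-(τ*L):ℝ):ℂ) * Complex.I by push_cast; ring,
        Complex.exp_mul_I, Complex.ofReal_neg, Complex.cos_neg, Complex.sin_neg]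
      ring
    have e_p2 : u*u = Complex.cos ((2*τ*L:ℝ):ℂ) + Complex.sin ((2*τ*L:ℝ):ℂ) * Complex.I := by
      rw [hu, ← Complex.exp_add,
        show Complex.I*(τ:ℂ)*(L:ℂ) + Complex.I*(τ:ℂ)*(L:ℂ) = ((2*τ*L:ℝ):ℂ)*Complex.I by
          push_cast; ring, Complex.exp_mul_I]
    have e_m2 : w*w = Complex.cos ((2*τ*L:ℝ):ℂ) - Complex.sin ((2*τ*L:ℝ):ℂ) * Complex.I := by
      rw [hw, ← Complex.exp_add,
        show -(Complex.I*(τ:ℂ)*(L:ℂ)) + -(Complex.I*(τ:ℂ)*(L:ℂ)) = ((-(2*τ*L):ℝ):ℂ)*Complex.I by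
          push_cast; ring, Complex.exp_mul_I, Complex.ofReal_neg, Complex.cos_neg,
        Complex.sin_neg]
      ring
    have hcos1 : Complex.cos ((τ*L:ℝ):ℂ) = (u + w)/2 := by rw [e_p1, e_m1]; ring
    have hsin1 : Complex.sin ((τ*L:ℝ):ℂ) = (w - u) * Complex.I / 2 := by
      rw [e_p1, e_m1]
      linear_combination Complex.sin ((τ*L:ℝ):ℂ) * Complex.I_sq
    have hcos2 : Complex.cos ((2*τ*L:ℝ):ℂ) = (u*u + w*w)/2 := by
      linear_combination (-(1:ℂ)/2) * e_p2 + (-(1:ℂ)/2) * e_m2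
    have hcc2 : (s:ℂ)*((u*u + w*w)/2)
        - 3*(τ:ℂ)*((w-u)*Complex.I/2)*Complex.sinh ((s*L:ℝ):ℂ)
        - (s:ℂ)*((u+w)/2)*Complex.cosh ((s*L:ℝ):ℂ) = 0 := by
      rw [← hcos2, ← hsin1, ← hcos1]; exact hcc0
    have hne : Complex.sinh ((s*L:ℝ):ℂ) * u ≠ 0 := mul_ne_zero hsh (Complex.exp_ne_zero _)
    apply mul_right_cancel₀ hne
    simp only [hF, Complex.ofReal_zero, mul_zero, Complex.exp_zero, pow_one, mul_one]
    rw [he1, he2, he3, hA, hB, hr1, hr2, hr3]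
    linear_combination
      (((s:ℂ)*u - (s:ℂ)*Complex.cosh ((s*L:ℝ):ℂ) + Complex.I*(τ:ℂ)*Complex.sinh ((s*L:ℝ):ℂ))) * hCsh3
      + (s:ℂ) * hpyth + 2*u^2 * hcc2
      + (-(((s:ℂ)*Complex.sinh ((s*L:ℝ):ℂ) + (s:ℂ)*C*Complex.cosh ((s*L:ℝ):ℂ)
          - Complex.I*(τ:ℂ)*Complex.cosh ((s*L:ℝ):ℂ)
          - Complex.I*(τ:ℂ)*C*Complex.sinh ((s*L:ℝ):ℂ)))*Complex.sinh ((s*L:ℝ):ℂ)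
        + (-(s:ℂ)*(1+u*w) + (s:ℂ)*Complex.cosh ((s*L:ℝ):ℂ)*u
          + 3*Complex.I*(τ:ℂ)*Complex.sinh ((s*L:ℝ):ℂ)*u)) * huw
  · -- ODE
    intro x
    rw [hd3, hd1, hψ, hF]
    simp only
    linear_combination (A * Complex.exp (r1 * (x : ℂ))) * hroot1 +
      (B * Complex.exp (r2 * (x : ℂ))) * hroot2 -
      (Complex.exp (r3 * (x : ℂ))) * hroot3
end

section
/- Let V be a vector space over ℂ, let K and T be linear maps from V to V, let α,λ∈ℂ, and let n be a positive integer. Set F = ker((K − α·id)ⁿ) and assume that ker((K − α·id)^{n+1}) = F. If K(Tv) = T(Kv) − λ·(Kv) + λ·v for every v∈F, then T(F) ⊆ F, i.e. Tv ∈ F for every v∈F. -/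
/-- If `K (T v) = T (K v) - λ (K v) + λ v` on the generalized eigenspace
`F = ker (K - α)^n`, and `ker (K - α)^(n+1) = F`, then `F` is invariant under `T`. -/
theorem stmt_3 {V : Type*} [AddCommGroup V] [Module ℂ V]
    (K T : Module.End ℂ V) (α lam : ℂ) (n : ℕ) (hn : 1 ≤ n)
    (hker : LinearMap.ker ((K - α • (1 : Module.End ℂ V)) ^ (n + 1)) =
      LinearMap.ker ((K - α • (1 : Module.End ℂ V)) ^ n))
    (hcomm : ∀ v ∈ LinearMap.ker ((K - α • (1 : Module.End ℂ V)) ^ n),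
      K (T v) = T (K v) - lam • (K v) + lam • v) :
    ∀ v ∈ LinearMap.ker ((K - α • (1 : Module.End ℂ V)) ^ n),
      T v ∈ LinearMap.ker ((K - α • (1 : Module.End ℂ V)) ^ n) := by
  set N : Module.End ℂ V := K - α • (1 : Module.End ℂ V) with hN
  -- commutation of K with N
  have hcK : Commute K N := by
    have : Commute K (α • (1 : Module.End ℂ V)) :=
      ((Commute.one_right K).smul_right α)
    exact (Commute.refl K).sub_right this
  have hcKn : ∀ m : ℕ, Commute K (N ^ m) := fun m => hcK.pow_right m
  -- F is invariant under N and under K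
  have hFN : ∀ v ∈ LinearMap.ker (N ^ n), N v ∈ LinearMap.ker (N ^ n) := by
    intro v hv
    have hv' : (N ^ n) v = 0 := hv
    have : (N ^ n) (N v) = N ((N ^ n) v) := by
      rw [← Module.End.mul_apply, ← Module.End.mul_apply, ← pow_succ, ← pow_succ']
    simp [LinearMap.mem_ker, this, hv']
  have hFK : ∀ v ∈ LinearMap.ker (N ^ n), K v ∈ LinearMap.ker (N ^ n) := by
    intro v hv
    have hv' : (N ^ n) v = 0 := hv
    have : (N ^ n) (K v) = K ((N ^ n) v) := by
      rw [← Module.End.mul_apply, ← Module.End.mul_apply, (hcKn n).eq]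
    simp [LinearMap.mem_ker, this, hv']
  -- base relation: N (T v) = T (N v) - lam • ((K - 1) v) for v ∈ F
  have hbase : ∀ v ∈ LinearMap.ker (N ^ n),
      N (T v) = T (N v) - lam • (K v) + lam • v := by
    intro v hv
    have h := hcomm v hv
    simp only [hN, LinearMap.sub_apply, LinearMap.smul_apply, Module.End.one_apply,
      map_sub, map_smul]
    rw [h]
    module
  -- induction: N^(k+1) (T v) = T (N^(k+1) v) - (k+1) • lam • ((K v' - v') with v' = N^k v)
  have hind : ∀ k : ℕ, ∀ v ∈ LinearMap.ker (N ^ n),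
      (N ^ (k + 1)) (T v) = T ((N ^ (k + 1)) v)
        - ((k : ℂ) + 1) • (lam • (K ((N ^ k) v)) - lam • ((N ^ k) v)) := by
    intro k
    induction k with
    | zero =>
      intro v hv
      have h := hbase v hv
      simp only [pow_one, pow_zero, Module.End.one_apply, Nat.cast_zero, zero_add, one_smul]
      rw [h]; module
    | succ k ih =>
      intro v hv
      have hNv : N v ∈ LinearMap.ker (N ^ n) := hFN v hv
      have h1 : (N ^ (k + 2)) (T v) = (N ^ (k + 1)) (N (T v)) := by
        rw [pow_succ]; rfl
      have hKN : ∀ m : ℕ, ∀ w : V, (N ^ m) (K w) = K ((N ^ m) w) := fun m w =>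
        (LinearMap.congr_fun (hcKn m).eq w).symm
      have hbv := hbase v hv
      have hih := ih (N v) hNv
      rw [h1, hbv]
      have hNk1N : (N ^ (k + 1)) (N v) = (N ^ (k + 2)) v := by
        conv_rhs => rw [pow_succ]
        rfl
      have hNkN : (N ^ k) (N v) = (N ^ (k + 1)) v := by
        conv_rhs => rw [pow_succ]
        rfl
      have expand : (N ^ (k + 1)) (T (N v) - lam • (K v) + lam • v)
          = (N ^ (k + 1)) (T (N v)) - lam • ((N ^ (k+1)) (K v)) + lam • ((N ^ (k+1)) v) := by
        simp [map_sub, map_add, map_smul]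
      rw [expand, hih, hNk1N, hNkN, hKN (k+1) v]
      push_cast
      module
  -- conclude
  intro v hv
  have h := hind n v hv
  have hv1 : (N ^ (n + 1)) v = 0 := by
    have : v ∈ LinearMap.ker (N ^ (n + 1)) := hker ▸ hv
    exact this
  have hNn : (N ^ n) v = 0 := hv
  rw [← hker]
  show (N ^ (n + 1)) (T v) = 0
  rw [h, hv1, hNn]
  simp
end

section
/- Let (μ_n)_{n∈ℕ} be a sequence of pairwise distinct nonzero real numbers with |μ_n| → ∞ as n → ∞, and let (a_n)_{n∈ℕ} be complex numbers with ∑ₙ |a_n| < ∞. If ∑ₙ a_n·μ_n^{−p} = 0 for every integer p ≥ 0, then a_n = 0 for every n. -/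
open Filter Topology

private lemma tsum_norm_bound (a t : ℕ → ℂ) (c : ℝ)
    (hsum : Summable fun k => ‖a k‖)
    (h : ∀ k, ‖t k‖ ≤ ‖a k‖ * c) :
    ‖∑' k, t k‖ ≤ (∑' k, ‖a k‖) * c := by
  have hs2 : Summable fun k => ‖a k‖ * c := hsum.mul_right c
  have hs1 : Summable fun k => ‖t k‖ :=
    hs2.of_nonneg_of_le (fun k => norm_nonneg _) h
  calc ‖∑' k, t k‖ ≤ ∑' k, ‖t k‖ := norm_tsum_le_tsum_norm hs1
    _ ≤ ∑' k, ‖a k‖ * c := Summable.tsum_le_tsum h hs1 hs2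
    _ = (∑' k, ‖a k‖) * c := tsum_mul_right

private lemma tendsto_of_geom_bound (F : ℕ → ℂ) (C q : ℝ) (hq0 : 0 ≤ q) (hq1 : q < 1)
    (h : ∀ p, ‖F p‖ ≤ C * q ^ p) : Tendsto F atTop (𝓝 0) := by
  apply squeeze_zero_norm h
  simpa using (tendsto_pow_atTop_nhds_zero_of_lt_one hq0 hq1).const_mul C

/-- Vanishing-moments lemma: if `(μ_n)` are pairwise distinct nonzero reals with
`|μ_n| → ∞`, `∑ |a_n| < ∞` and `∑ a_n μ_n^{-p} = 0` for all integers `p ≥ 0`,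
then all `a_n` vanish. -/
theorem stmt_5 (μ : ℕ → ℝ) (a : ℕ → ℂ)
    (hinj : Function.Injective μ)
    (hne : ∀ n, μ n ≠ 0)
    (htend : Filter.Tendsto (fun n => |μ n|) Filter.atTop Filter.atTop)
    (hsum : Summable fun n => ‖a n‖)
    (hmom : ∀ p : ℕ, ∑' n, a n * (((μ n) ^ p : ℝ) : ℂ)⁻¹ = 0) :
    ∀ n, a n = 0 := by
  by_contra hcon
  push_neg at hcon
  obtain ⟨s0, hs0⟩ := hcon
  -- sublevel sets of |μ| are finite
  have hfin : ∀ B : ℝ, {k : ℕ | |μ k| ≤ B}.Finite := by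
    intro B
    obtain ⟨N, hN⟩ := Filter.eventually_atTop.mp (htend.eventually_ge_atTop (B + 1))
    apply Set.Finite.subset (Set.finite_Iio N)
    intro k hk
    simp only [Set.mem_setOf_eq] at hk
    simp only [Set.mem_Iio]
    by_contra hkN
    have := hN k (le_of_not_gt hkN)
    linarith
  -- pick n with a n ≠ 0 minimizing |μ n|
  have hFfin : {k | a k ≠ 0 ∧ |μ k| ≤ |μ s0|}.Finite := (hfin _).subset fun k hk => hk.2
  have hs0F : s0 ∈ hFfin.toFinset := hFfin.mem_toFinset.mpr ⟨hs0, le_refl _⟩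
  obtain ⟨n, hnF, hmin⟩ := hFfin.toFinset.exists_min_image (fun k => |μ k|) ⟨s0, hs0F⟩
  have hnF' := hFfin.mem_toFinset.mp hnF
  have han : a n ≠ 0 := hnF'.1
  have hIH : ∀ m, |μ m| < |μ n| → a m = 0 := by
    intro m hm
    by_contra ham
    have hmF : m ∈ hFfin.toFinset := hFfin.mem_toFinset.mpr ⟨ham, hm.le.trans hnF'.2⟩
    exact absurd (hmin m hmF) (not_le.mpr hm)
  have hμn : 0 < |μ n| := abs_pos.mpr (hne n)
  set r : ℕ → ℂ := fun k => ((μ n / μ k : ℝ) : ℂ) with hr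
  set f : ℕ → ℂ := fun k => if |μ k| < |μ n| then 0 else a k with hf
  have hrnorm : ∀ k, ‖r k‖ = |μ n| / |μ k| := by
    intro k
    simp [hr, Complex.norm_real, Real.norm_eq_abs, abs_div]
  have hfa : ∀ k, ‖f k‖ ≤ ‖a k‖ := by
    intro k; simp only [hf]; split <;> simp
  have hrle : ∀ k, ¬|μ k| < |μ n| → ‖r k‖ ≤ 1 := by
    intro k hk
    rw [hrnorm, div_le_one (lt_of_lt_of_le hμn (not_lt.mp hk))]
    exact not_lt.mp hk
  have hterm : ∀ p k, ‖f k * r k ^ p‖ ≤ ‖a k‖ := by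
    intro p k
    by_cases hk : |μ k| < |μ n|
    · simp [hf, hk]
    · rw [norm_mul, norm_pow]
      calc ‖f k‖ * ‖r k‖ ^ p ≤ ‖a k‖ * 1 :=
            mul_le_mul (hfa k) (pow_le_one₀ (norm_nonneg _) (hrle k hk))
              (by positivity) (norm_nonneg _)
        _ = ‖a k‖ := mul_one _
  have hsummable : ∀ p, Summable fun k => f k * r k ^ p := fun p =>
    Summable.of_norm_bounded hsum (hterm p)
  have hkey : ∀ p, ∑' k, f k * r k ^ p = 0 := by
    intro p
    have he : ∀ k, f k * r k ^ p = ((μ n ^ p : ℝ) : ℂ) * (a k * (((μ k) ^ p : ℝ) : ℂ)⁻¹) := by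
      intro k
      by_cases hk : |μ k| < |μ n|
      · simp [hf, hk, hIH k hk]
      · have hk0 : ((μ k : ℝ) : ℂ) ≠ 0 := Complex.ofReal_ne_zero.mpr (hne k)
        simp only [hf, hr, if_neg hk]
        push_cast
        field_simp
        ring_nf
        rw [inv_pow, mul_inv_cancel_right₀ (pow_ne_zero _ hk0)]
    rw [tsum_congr he, tsum_mul_left, hmom p, mul_zero]
  -- geometric ratio bound for indices with |μ k| > |μ n|
  have hqex : ∃ q : ℝ, 0 ≤ q ∧ q < 1 ∧ ∀ k, |μ n| < |μ k| → ‖r k‖ ≤ q := by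
    by_cases hT : ∃ t, |μ n| < |μ t|
    · obtain ⟨t0, ht0⟩ := hT
      have hGfin : {k | |μ n| < |μ k| ∧ |μ k| ≤ |μ t0|}.Finite := (hfin _).subset fun k hk => hk.2
      have hGne : t0 ∈ hGfin.toFinset := hGfin.mem_toFinset.mpr ⟨ht0, le_refl _⟩
      obtain ⟨k0, hk0G, hk0min⟩ := hGfin.toFinset.exists_min_image (fun k => |μ k|) ⟨t0, hGne⟩
      have hk0G' := hGfin.mem_toFinset.mp hk0G
      have hc : |μ n| < |μ k0| := hk0G'.1
      have hcpos : 0 < |μ k0| := lt_trans hμn hc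
      refine ⟨|μ n| / |μ k0|, by positivity, by rwa [div_lt_one hcpos], ?_⟩
      intro k hk
      rw [hrnorm]
      have hk0le : |μ k0| ≤ |μ k| := by
        by_cases h : |μ k| ≤ |μ t0|
        · exact hk0min k (hGfin.mem_toFinset.mpr ⟨hk, h⟩)
        · exact le_trans hk0G'.2 (le_of_not_ge h)
      gcongr
    · exact ⟨1 / 2, by norm_num, by norm_num, fun k hk => absurd ⟨k, hk⟩ hT⟩
  obtain ⟨q, hq0, hq1, hqb⟩ := hqex
  set C := ∑' k, ‖a k‖ with hC
  have hfn : f n = a n := by simp [hf]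
  have hrn : r n = 1 := by
    simp only [hr]
    rw [div_self (hne n)]
    push_cast
    ring
  by_cases hopp : ∃ m, μ m = -μ n
  · -- case with opposite value present
    obtain ⟨n', hn'⟩ := hopp
    have hnn' : n' ≠ n := by
      intro h
      rw [h] at hn'
      have := hne n
      apply this
      linarith
    have habs' : |μ n'| = |μ n| := by rw [hn', abs_neg]
    have hfn' : f n' = a n' := by simp [hf, habs']
    have hrn' : r n' = -1 := by
      simp only [hr, hn']
      rw [div_neg, div_self (hne n)]
      push_cast
      ring
    set tl : ℕ → ℂ := fun p => ∑' k, if k = n' then 0 else if k = n then 0 else f k * r k ^ p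
       with htl
    have hiden : ∀ p, a n + a n' * (-1 : ℂ) ^ p + tl p = 0 := by
      intro p
      have hs := hsummable p
      have h1 := Summable.tsum_eq_add_tsum_ite hs n
      have hg : Summable fun k => if k = n then 0 else f k * r k ^ p := by
        apply Summable.of_norm_bounded hsum
        intro k
        split
        · simp
        · exact hterm p k
      have h2 := Summable.tsum_eq_add_tsum_ite hg n'
      rw [if_neg hnn'] at h2
      rw [hkey p] at h1
      rw [h2, hfn, hrn, hfn', hrn', one_pow, mul_one] at h1
      rw [htl]
      linear_combination -h1
    have htail : ∀ p, ‖tl p‖ ≤ C * q ^ p := by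
      intro p
      apply tsum_norm_bound a _ _ hsum
      intro k
      by_cases h1 : k = n'
      · simp only [h1, if_pos rfl]
        simp
        positivity
      by_cases h2 : k = n
      · simp only [if_neg h1, h2, if_pos rfl]
        simp
        positivity
      rw [if_neg h1, if_neg h2]
      by_cases h3 : |μ k| < |μ n|
      · simp only [hf, if_pos h3, zero_mul, norm_zero]
        positivity
      · have hbig : |μ n| < |μ k| := by
          rcases (not_lt.mp h3).lt_or_eq with h | h
          · exact h
          · exfalso
            rcases abs_eq_abs.mp h.symm with h4 | h4
            · exact h2 (hinj h4)
            · exact h1 (hinj (show μ k = μ n' by rw [h4, hn']))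
        rw [norm_mul, norm_pow]
        have hfk : ‖f k‖ = ‖a k‖ := by simp [hf, h3]
        rw [hfk]
        gcongr
        exact hqb k hbig
    have hlim := tendsto_of_geom_bound tl C q hq0 hq1 htail
    have he : a n + a n' = 0 := by
      have h2m : Tendsto (fun m : ℕ => 2 * m) atTop atTop :=
        tendsto_atTop_mono (fun m => by simp only [id_eq]; omega) tendsto_id
      have hco := hlim.comp h2m
      have heq : (tl ∘ fun m : ℕ => 2 * m) = fun _ => -(a n + a n') := by
        funext m
        have hh := hiden (2 * m)
        simp only [Function.comp_apply]
        rw [pow_mul] at hh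
        norm_num at hh
        linear_combination hh
      rw [heq] at hco
      have := tendsto_nhds_unique tendsto_const_nhds hco
      linear_combination -this
    have ho : a n - a n' = 0 := by
      have h2m : Tendsto (fun m : ℕ => 2 * m + 1) atTop atTop :=
        tendsto_atTop_mono (fun m => by simp only [id_eq]; omega) tendsto_id
      have hco := hlim.comp h2m
      have heq : (tl ∘ fun m : ℕ => 2 * m + 1) = fun _ => -(a n - a n') := by
        funext m
        have hh := hiden (2 * m + 1)
        simp only [Function.comp_apply]
        rw [pow_succ, pow_mul] at hh
        norm_num at hh
        linear_combination hh
      rw [heq] at hco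
      have := tendsto_nhds_unique tendsto_const_nhds hco
      linear_combination -this
    exact han (by linear_combination (he + ho) / 2)
  · -- no opposite value
    set tl : ℕ → ℂ := fun p => ∑' k, if k = n then 0 else f k * r k ^ p with htl
    have hiden : ∀ p, a n + tl p = 0 := by
      intro p
      have h1 := Summable.tsum_eq_add_tsum_ite (hsummable p) n
      rw [hkey p, hfn, hrn, one_pow, mul_one] at h1
      rw [htl]
      linear_combination -h1
    have htail : ∀ p, ‖tl p‖ ≤ C * q ^ p := by
      intro p
      apply tsum_norm_bound a _ _ hsum
      intro k
      by_cases h2 : k = n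
      · simp only [h2, if_pos rfl]
        simp
        positivity
      rw [if_neg h2]
      by_cases h3 : |μ k| < |μ n|
      · simp only [hf, if_pos h3, zero_mul, norm_zero]
        positivity
      · have hbig : |μ n| < |μ k| := by
          rcases (not_lt.mp h3).lt_or_eq with h | h
          · exact h
          · exfalso
            rcases abs_eq_abs.mp h.symm with h4 | h4
            · exact h2 (hinj h4)
            · exact hopp ⟨k, h4⟩
        rw [norm_mul, norm_pow]
        have hfk : ‖f k‖ = ‖a k‖ := by simp [hf, h3]
        rw [hfk]
        gcongr
        exact hqb k hbig
    have hlim := tendsto_of_geom_bound tl C q hq0 hq1 htail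
    have heq : tl = fun _ => -(a n) := by
      funext p
      linear_combination hiden p
    rw [heq] at hlim
    have := tendsto_nhds_unique tendsto_const_nhds hlim
    exact han (by linear_combination -this)
end

section
/- Let L>0 be such that L/(2π) is not an integer. If φ:ℝ→ℂ is three times continuously differentiable and satisfies φ'''(x) + φ'(x) = 0 for all x∈[0,L], together with φ(0)=0, φ(L)=0 and φ'(0)=φ'(L), then φ(x)=0 for all x∈[0,L]. -/
open Set Complex

private lemma conj_hasDerivAt {f : ℝ → ℂ} {f' : ℂ} {x : ℝ} (hf : HasDerivAt f f' x) :
    HasDerivAt (fun y => (starRingEnd ℂ) (f y)) ((starRingEnd ℂ) f') x :=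
  Complex.conjCLE.hasFDerivAt.comp_hasDerivAt x hf

/-- If `L/(2π)` is not an integer, then `0` is not an eigenvalue of
`A φ = -φ''' - φ'` with boundary conditions `φ(0)=φ(L)=0`, `φ'(0)=φ'(L)`. -/
theorem stmt_6 (L : ℝ) (hL : 0 < L)
    (hLnot : ¬ ∃ k : ℤ, L / (2 * Real.pi) = (k : ℝ))
    (φ : ℝ → ℂ) (hreg : ContDiff ℝ 3 φ)
    (heq : ∀ x ∈ Set.Icc (0 : ℝ) L, iteratedDeriv 3 φ x + deriv φ x = 0)
    (h0 : φ 0 = 0) (hLval : φ L = 0) (hder : deriv φ 0 = deriv φ L) :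
    ∀ x ∈ Set.Icc (0 : ℝ) L, φ x = 0 := by
  -- regularity bookkeeping
  set φ₁ := deriv φ with hφ1
  set φ₂ := deriv φ₁ with hφ2
  set φ₃ := deriv φ₂ with hφ3
  have h3 : (3 : WithTop ℕ∞) = 2 + 1 := by norm_num
  have hd : Differentiable ℝ φ ∧ ContDiff ℝ 2 φ₁ := by
    rw [h3] at hreg
    obtain ⟨h1, _, h2⟩ := contDiff_succ_iff_deriv.mp hreg
    exact ⟨h1, h2⟩
  have h2' : (2 : WithTop ℕ∞) = 1 + 1 := by norm_num
  have hd1 : Differentiable ℝ φ₁ ∧ ContDiff ℝ 1 φ₂ := by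
    have h := hd.2; rw [h2'] at h
    obtain ⟨h1, _, h2⟩ := contDiff_succ_iff_deriv.mp h
    exact ⟨h1, h2⟩
  have hd2 : Differentiable ℝ φ₂ := hd1.2.differentiable one_ne_zero
  have hiter : ∀ x, iteratedDeriv 3 φ x = φ₃ x := by
    intro x
    simp only [iteratedDeriv_succ, iteratedDeriv_zero]
    rfl
  have hD0 : ∀ x, HasDerivAt φ (φ₁ x) x := fun x => (hd.1 x).hasDerivAt
  have hD1 : ∀ x, HasDerivAt φ₁ (φ₂ x) x := fun x => (hd1.1 x).hasDerivAt
  have hD2 : ∀ x, HasDerivAt φ₂ (φ₃ x) x := fun x => (hd2 x).hasDerivAt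
  -- Step 1: ψ = φ'' + φ is constant on [0,L]
  set c := φ₂ 0 with hc
  set b := φ₁ 0 with hb
  have hψ : ∀ x ∈ Icc (0 : ℝ) L, φ₂ x + φ x = c := by
    have hcont : ContinuousOn (fun x => φ₂ x + φ x) (Icc 0 L) :=
      (hd2.continuous.add hd.1.continuous).continuousOn
    have hderiv : ∀ x ∈ Ico (0 : ℝ) L,
        HasDerivWithinAt (fun x => φ₂ x + φ x) 0 (Ici x) x := by
      intro x hx
      have h := ((hD2 x).add (hD0 x)).hasDerivWithinAt (s := Ici x)
      have hz : φ₃ x + φ₁ x = 0 := by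
        have h' := heq x ⟨hx.1, hx.2.le⟩
        rwa [hiter x] at h'
      rwa [hz] at h
    intro x hx
    have h := constant_of_has_deriv_right_zero hcont hderiv x hx
    simpa [h0] using h
  -- Step 2: energy method for g = φ - c + c cos - b sin
  set g : ℝ → ℂ := fun x => φ x - c + c * (Real.cos x : ℂ) - b * (Real.sin x : ℂ) with hgdef
  set g₁ : ℝ → ℂ := fun x => φ₁ x - c * (Real.sin x : ℂ) - b * (Real.cos x : ℂ) with hg1def
  set g₂ : ℝ → ℂ := fun x => φ₂ x - c * (Real.cos x : ℂ) + b * (Real.sin x : ℂ) with hg2def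
  have hcos : ∀ x : ℝ, HasDerivAt (fun y : ℝ => ((Real.cos y : ℂ))) (-(Real.sin x : ℂ)) x := by
    intro x
    simpa using (Real.hasDerivAt_cos x).ofReal_comp
  have hsin : ∀ x : ℝ, HasDerivAt (fun y : ℝ => ((Real.sin y : ℂ))) ((Real.cos x : ℂ)) x := by
    intro x
    simpa using (Real.hasDerivAt_sin x).ofReal_comp
  have hg : ∀ x, HasDerivAt g (g₁ x) x := by
    intro x
    have h := (((hD0 x).sub_const (c : ℂ)).add ((hcos x).const_mul c)).sub ((hsin x).const_mul b)
    have he : φ₁ x + c * -(Real.sin x : ℂ) - b * (Real.cos x : ℂ) = g₁ x := by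
      simp only [hg1def]; ring
    rw [he] at h
    exact h
  have hg1 : ∀ x, HasDerivAt g₁ (g₂ x) x := by
    intro x
    have h := ((hD1 x).sub ((hsin x).const_mul c)).sub ((hcos x).const_mul b)
    have he : φ₂ x - c * (Real.cos x : ℂ) - b * -(Real.sin x : ℂ) = g₂ x := by
      simp only [hg2def]; ring
    rw [he] at h
    exact h
  set E : ℝ → ℂ := fun x =>
    g x * (starRingEnd ℂ) (g x) + g₁ x * (starRingEnd ℂ) (g₁ x) with hEdef
  have hgc : Continuous g := Differentiable.continuous fun x => (hg x).differentiableAt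
  have hg1c : Continuous g₁ := Differentiable.continuous fun x => (hg1 x).differentiableAt
  have hEcont : ContinuousOn E (Icc 0 L) := by
    apply Continuous.continuousOn
    exact (hgc.mul (Complex.continuous_conj.comp hgc)).add
      (hg1c.mul (Complex.continuous_conj.comp hg1c))
  have hEderiv : ∀ x ∈ Ico (0 : ℝ) L, HasDerivWithinAt E 0 (Ici x) x := by
    intro x hx
    have hE := ((hg x).mul (conj_hasDerivAt (hg x))).add
      ((hg1 x).mul (conj_hasDerivAt (hg1 x)))
    have hgg : g₂ x = -g x := by
      have h := hψ x ⟨hx.1, hx.2.le⟩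
      simp only [hg2def, hgdef]
      linear_combination h
    have hval : g₁ x * (starRingEnd ℂ) (g x) + g x * (starRingEnd ℂ) (g₁ x) +
        (g₂ x * (starRingEnd ℂ) (g₁ x) + g₁ x * (starRingEnd ℂ) (g₂ x)) = 0 := by
      rw [hgg, map_neg]; ring
    rw [hval] at hE
    exact hE.hasDerivWithinAt
  have hg0 : g 0 = 0 := by simp [hgdef, h0]
  have hg10 : g₁ 0 = 0 := by simp [hg1def, hb]
  have hE0 : E 0 = 0 := by simp [hEdef, hg0, hg10]
  have hEzero : ∀ x ∈ Icc (0 : ℝ) L, E x = 0 := by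
    intro x hx
    have h := constant_of_has_deriv_right_zero hEcont hEderiv x hx
    rw [h, hE0]
  have hgzero : ∀ x ∈ Icc (0 : ℝ) L, g x = 0 ∧ g₁ x = 0 := by
    intro x hx
    have h := hEzero x hx
    rw [hEdef] at h
    simp only [Complex.mul_conj] at h
    have h' : Complex.normSq (g x) + Complex.normSq (g₁ x) = 0 := by exact_mod_cast h
    have h1 : Complex.normSq (g x) = 0 := by
      nlinarith [Complex.normSq_nonneg (g x), Complex.normSq_nonneg (g₁ x)]
    have h2 : Complex.normSq (g₁ x) = 0 := by
      nlinarith [Complex.normSq_nonneg (g x), Complex.normSq_nonneg (g₁ x)]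
    exact ⟨Complex.normSq_eq_zero.mp h1, Complex.normSq_eq_zero.mp h2⟩
  -- Step 3: boundary conditions force b = c = 0
  have hmemL : L ∈ Icc (0 : ℝ) L := ⟨hL.le, le_refl _⟩
  have hgL := (hgzero L hmemL).1
  have hg1L := (hgzero L hmemL).2
  set S : ℂ := (Real.sin L : ℂ) with hS
  set T : ℂ := 1 - (Real.cos L : ℂ) with hT
  have e1 : c * T + b * S = 0 := by
    simp only [hgdef, hLval] at hgL
    rw [hT, hS]
    linear_combination -hgL
  have e2 : c * S - b * T = 0 := by
    -- φ₁ L = c sin L + b cos L, and φ₁ 0 = φ₁ L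
    simp only [hg1def] at hg1L
    rw [hS, hT]
    linear_combination -hg1L - hder
  have hTne : T ≠ 0 := by
    rw [hT]
    intro h
    have hcL : (Real.cos L : ℂ) = 1 := by linear_combination -h
    have hcL' : Real.cos L = 1 := by exact_mod_cast hcL
    obtain ⟨n, hn⟩ := (Real.cos_eq_one_iff L).mp hcL'
    apply hLnot
    refine ⟨n, ?_⟩
    rw [← hn]
    field_simp
  have hST : S ^ 2 + T ^ 2 = 2 * T := by
    have h : Real.sin L ^ 2 + Real.cos L ^ 2 = 1 := Real.sin_sq_add_cos_sq L
    rw [hS, hT]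
    have h' : ((Real.sin L : ℂ)) ^ 2 + ((Real.cos L : ℂ)) ^ 2 = 1 := by exact_mod_cast h
    linear_combination h'
  have hbz : b = 0 := by
    have h : b * (S ^ 2 + T ^ 2) = 0 := by linear_combination S * e1 - T * e2
    rw [hST] at h
    rcases mul_eq_zero.mp h with h' | h'
    · exact h'
    · exact absurd (by linear_combination h' / 2) hTne
  have hcz : c = 0 := by
    have h : c * T = 0 := by linear_combination e1 - S * hbz
    rcases mul_eq_zero.mp h with h' | h'
    · exact h'
    · exact absurd h' hTne
  intro x hx
  have h := (hgzero x hx).1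
  simp only [hgdef, hbz, hcz] at h
  simpa using h
end

section
/- Let λ>0, C ≥ 0 and T>0. Let y:ℝ→ℝ be differentiable on [0,T] with y(t) ≥ 0 for all t∈[0,T], and suppose y'(t) ≤ −2λ·y(t) + C·y(t)^{3/2} for all t∈[0,T]. If C·√(y(0)) ≤ λ, then y(t) ≤ e^{−λt}·y(0) for all t∈[0,T]. -/
lemma sqrt_add_le' (u ε : ℝ) (hu : 0 ≤ u) (hε : 0 ≤ ε) :
    Real.sqrt (u + ε) ≤ Real.sqrt u + Real.sqrt ε := by
  rw [show Real.sqrt u + Real.sqrt ε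
      = Real.sqrt ((Real.sqrt u + Real.sqrt ε) ^ 2) from
    (Real.sqrt_sq (by positivity)).symm]
  apply Real.sqrt_le_sqrt
  nlinarith [Real.sq_sqrt hu, Real.sq_sqrt hε, Real.sqrt_nonneg u, Real.sqrt_nonneg ε]

/-- Lyapunov differential inequality: if `y ≥ 0`, `y' ≤ -2λ y + C y^{3/2}` on `[0,T]`
and `C √(y 0) ≤ λ`, then `y t ≤ e^{-λ t} y 0` on `[0,T]`. -/
theorem stmt_9 (lam C T : ℝ) (hlam : 0 < lam) (hC : 0 ≤ C) (hT : 0 < T)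
    (y : ℝ → ℝ)
    (hdiff : ∀ t ∈ Set.Icc (0 : ℝ) T, DifferentiableAt ℝ y t)
    (hpos : ∀ t ∈ Set.Icc (0 : ℝ) T, 0 ≤ y t)
    (hineq : ∀ t ∈ Set.Icc (0 : ℝ) T,
      deriv y t ≤ -2 * lam * y t + C * (y t * Real.sqrt (y t)))
    (hinit : C * Real.sqrt (y 0) ≤ lam) :
    ∀ t ∈ Set.Icc (0 : ℝ) T, y t ≤ Real.exp (-lam * t) * y 0 := by
  -- Step 1: for every small ε > 0, with δ = C√ε < λ, we have
  -- y t ≤ exp (-(λ-δ) t) * y 0 + ε on [0,T].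
  have key : ∀ ε : ℝ, 0 < ε → C * Real.sqrt ε < lam →
      ∀ t ∈ Set.Icc (0 : ℝ) T,
        y t ≤ Real.exp (-(lam - C * Real.sqrt ε) * t) * y 0 + ε := by
    intro ε hε hδ
    set δ := C * Real.sqrt ε with hδdef
    have hδ0 : 0 ≤ δ := by positivity
    have hμ : 0 < lam - δ := by linarith
    set B : ℝ → ℝ := fun x => Real.exp (-(lam - δ) * x) * y 0 + ε with hB
    set B' : ℝ → ℝ := fun x =>
      Real.exp (-(lam - δ) * x) * (-(lam - δ)) * y 0 with hB'
    have hy0 : 0 ≤ y 0 := hpos 0 ⟨le_rfl, hT.le⟩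
    have hBder : ∀ x : ℝ, HasDerivAt B (B' x) x := by
      intro x
      have h1 : HasDerivAt (fun x : ℝ => -(lam - δ) * x) (-(lam - δ)) x := by
        simpa using (hasDerivAt_id x).const_mul (-(lam - δ))
      exact ((h1.exp.mul_const (y 0)).add_const ε)
    have hcont : ContinuousOn y (Set.Icc 0 T) := fun x hx =>
      (hdiff x hx).continuousAt.continuousWithinAt
    have hyder : ∀ x ∈ Set.Ico (0 : ℝ) T,
        HasDerivWithinAt y (deriv y x) (Set.Ici x) x := fun x hx =>
      (hdiff x ⟨hx.1, hx.2.le⟩).hasDerivAt.hasDerivWithinAt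
    have ha : y 0 ≤ B 0 := by
      simp only [hB, mul_zero, neg_zero, Real.exp_zero, one_mul]
      linarith
    have bound : ∀ x ∈ Set.Ico (0 : ℝ) T, y x = B x → deriv y x < B' x := by
      intro x hx hyx
      set u := Real.exp (-(lam - δ) * x) * y 0 with hu
      have hu0 : 0 ≤ u := by positivity
      have huy0 : u ≤ y 0 := by
        have : Real.exp (-(lam - δ) * x) ≤ 1 := by
          rw [Real.exp_le_one_iff]
          nlinarith [hx.1]
        nlinarith
      have hsqrt : Real.sqrt (u + ε) ≤ Real.sqrt (y 0) + Real.sqrt ε := by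
        calc Real.sqrt (u + ε) ≤ Real.sqrt u + Real.sqrt ε :=
              sqrt_add_le' u ε hu0 hε.le
          _ ≤ Real.sqrt (y 0) + Real.sqrt ε := by
              have := Real.sqrt_le_sqrt huy0
              linarith
      have hCs : C * Real.sqrt (u + ε) ≤ lam + δ := by
        have := mul_le_mul_of_nonneg_left hsqrt hC
        nlinarith
      have hder := hineq x ⟨hx.1, hx.2.le⟩
      rw [hyx] at hder
      have hBx : B x = u + ε := rfl
      rw [hBx] at hder
      have h2 : deriv y x ≤ -(lam - δ) * (u + ε) := by
        have h3 : C * ((u + ε) * Real.sqrt (u + ε)) ≤ (lam + δ) * (u + ε) := by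
          have h4 : C * Real.sqrt (u + ε) * (u + ε) ≤ (lam + δ) * (u + ε) :=
            mul_le_mul_of_nonneg_right hCs (by positivity)
          nlinarith
        nlinarith
      have hB'x : B' x = -(lam - δ) * u := by
        simp only [hB', hu]; ring
      rw [hB'x]
      have : -(lam - δ) * (u + ε) < -(lam - δ) * u := by nlinarith
      linarith
    exact fun t ht =>
      image_le_of_deriv_right_lt_deriv_boundary hcont hyder ha hBder bound ht
  -- Step 2: let ε → 0⁺.
  intro t ht
  set g : ℝ → ℝ := fun ε => Real.exp (-(lam - C * Real.sqrt ε) * t) * y 0 + ε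
    with hg
  have hgc : ContinuousAt g 0 := by
    have : Continuous g := by
      apply Continuous.add _ continuous_id
      apply Continuous.mul _ continuous_const
      apply Real.continuous_exp.comp
      continuity
    exact this.continuousAt
  have hg0 : g 0 = Real.exp (-lam * t) * y 0 := by
    simp [hg]
  have htend : Filter.Tendsto g (nhdsWithin 0 (Set.Ioi 0))
      (nhds (Real.exp (-lam * t) * y 0)) := by
    rw [← hg0]
    exact hgc.continuousWithinAt.tendsto
  refine ge_of_tendsto htend ?_
  have hmem : Set.Ioo (0 : ℝ) ((lam / (C + 1)) ^ 2) ∈ nhdsWithin (0 : ℝ) (Set.Ioi 0) :=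
    Ioo_mem_nhdsGT_of_mem ⟨le_rfl, by positivity⟩
  filter_upwards [hmem] with ε hεm
  have hε : 0 < ε := hεm.1
  have hsmall : C * Real.sqrt ε < lam := by
    have h1 : Real.sqrt ε < lam / (C + 1) := by
      have := Real.sqrt_lt_sqrt hε.le hεm.2
      rwa [Real.sqrt_sq (by positivity : (0:ℝ) ≤ lam / (C + 1))] at this
    have h2 : C * Real.sqrt ε ≤ C * (lam / (C + 1)) :=
      mul_le_mul_of_nonneg_left h1.le hC
    have h3 : C * (lam / (C + 1)) < lam := by
      rw [mul_div_assoc'] at *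
      rw [div_lt_iff₀ (by positivity)]
      nlinarith
    linarith
  exact key ε hε hsmall t ht
end

section
/- There exists a constant C>0 such that for every nonzero integer j, ∑_{k∈ℤ, k≠0, k≠j} k²/((k³−j³)²·j²) ≤ C/j⁴. -/
/-- There is `C > 0` such that for every nonzero integer `j`,
`∑_{k ≠ 0, k ≠ j} k² / ((k³ - j³)² j²) ≤ C / j⁴`. -/
theorem stmt_10 :
    ∃ C : ℝ, 0 < C ∧ ∀ j : ℤ, j ≠ 0 →
      (∑' k : {k : ℤ // k ≠ 0 ∧ k ≠ j},
          ((k : ℤ) : ℝ) ^ 2 / ((((k : ℤ) : ℝ) ^ 3 - (j : ℝ) ^ 3) ^ 2 * (j : ℝ) ^ 2))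
        ≤ C / (j : ℝ) ^ 4 := by
  have hsum2 : Summable (fun m : ℤ => 1 / (m : ℝ) ^ 2) :=
    Real.summable_one_div_int_pow.mpr one_lt_two
  set T : ℝ := ∑' m : ℤ, 1 / (m : ℝ) ^ 2 with hTdef
  have hT1 : (1 : ℝ) ≤ T := by
    have h := Summable.le_tsum hsum2 1 (fun m _ => by positivity)
    simpa only [Int.cast_one, one_pow, div_one] using h
  have hTpos : 0 < T := lt_of_lt_of_le one_pos hT1
  refine ⟨16 / 9 * T, by positivity, fun j hj => ?_⟩
  have hy : ((j : ℝ)) ≠ 0 := Int.cast_ne_zero.mpr hj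
  have hy2 : (0 : ℝ) < (j : ℝ) ^ 2 := by positivity
  have hy4 : (0 : ℝ) < (j : ℝ) ^ 4 := by positivity
  set S := {k : ℤ // k ≠ 0 ∧ k ≠ j}
  set f : S → ℝ := fun k =>
    ((k : ℤ) : ℝ) ^ 2 / ((((k : ℤ) : ℝ) ^ 3 - (j : ℝ) ^ 3) ^ 2 * (j : ℝ) ^ 2) with hfdef
  set g : S → ℝ := fun k =>
    (16 / 9 / (j : ℝ) ^ 4) * (1 / (((k : ℤ) - j : ℤ) : ℝ) ^ 2) with hgdef
  have hinj : Function.Injective (fun k : S => (k : ℤ) - j) := by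
    intro a b h
    have h' : (a : ℤ) - j = (b : ℤ) - j := h
    exact Subtype.ext (by omega)
  have hle : ∀ k : S, f k ≤ g k := by
    rintro ⟨k, hk0, hkj⟩
    simp only [hfdef, hgdef]
    set x : ℝ := ((k : ℤ) : ℝ) with hx
    have hxne : x ≠ 0 := Int.cast_ne_zero.mpr hk0
    have hxy : x ≠ (j : ℝ) := by
      simp only [hx, ne_eq, Int.cast_inj]
      exact hkj
    have hx2 : (0 : ℝ) < x ^ 2 := by positivity
    have hq : (0 : ℝ) < x ^ 2 + x * (j : ℝ) + (j : ℝ) ^ 2 := by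
      nlinarith [sq_nonneg (2 * x + (j : ℝ)), hy2]
    have hdne : x ^ 3 - (j : ℝ) ^ 3 ≠ 0 := by
      have hfac : x ^ 3 - (j : ℝ) ^ 3 =
          (x - (j : ℝ)) * (x ^ 2 + x * (j : ℝ) + (j : ℝ) ^ 2) := by ring
      rw [hfac]
      exact mul_ne_zero (sub_ne_zero.mpr hxy) (ne_of_gt hq)
    have hd : (0 : ℝ) < (x ^ 3 - (j : ℝ) ^ 3) ^ 2 := by positivity
    have hxyne : x - (j : ℝ) ≠ 0 := sub_ne_zero.mpr hxy
    have hkj2 : (0 : ℝ) < (x - (j : ℝ)) ^ 2 := by positivity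
    have hrhs : (16 / 9 / (j : ℝ) ^ 4) * (1 / (((k - j : ℤ) : ℝ)) ^ 2) =
        (16 / 9) / ((j : ℝ) ^ 4 * (x - (j : ℝ)) ^ 2) := by
      push_cast
      rw [← hx]
      field_simp
    rw [hrhs, div_le_div_iff₀ (by positivity) (by positivity)]
    have h34x : 3 / 4 * x ^ 2 ≤ x ^ 2 + x * (j : ℝ) + (j : ℝ) ^ 2 := by
      nlinarith [sq_nonneg (x + 2 * (j : ℝ))]
    have h34y : 3 / 4 * (j : ℝ) ^ 2 ≤ x ^ 2 + x * (j : ℝ) + (j : ℝ) ^ 2 := by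
      nlinarith [sq_nonneg (2 * x + (j : ℝ))]
    have h1 : (3 / 4 * x ^ 2) * (3 / 4 * (j : ℝ) ^ 2) ≤
        (x ^ 2 + x * (j : ℝ) + (j : ℝ) ^ 2) * (x ^ 2 + x * (j : ℝ) + (j : ℝ) ^ 2) :=
      mul_le_mul h34x h34y (by positivity) hq.le
    nlinarith [mul_le_mul_of_nonneg_left h1
      (show (0 : ℝ) ≤ (x - (j : ℝ)) ^ 2 * (j : ℝ) ^ 2 by positivity)]
  have hgsum : Summable g := by
    apply Summable.mul_left
    exact hsum2.comp_injective hinj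
  have hfnn : ∀ k : S, 0 ≤ f k := fun k => by
    simp only [hfdef]; positivity
  have hfsum : Summable f := Summable.of_nonneg_of_le hfnn hle hgsum
  calc (∑' k : S, f k) ≤ ∑' k : S, g k := Summable.tsum_le_tsum hle hfsum hgsum
    _ = (16 / 9 / (j : ℝ) ^ 4) * ∑' k : S, 1 / (((k : ℤ) - j : ℤ) : ℝ) ^ 2 := tsum_mul_left
    _ ≤ (16 / 9 / (j : ℝ) ^ 4) * T := by
        apply mul_le_mul_of_nonneg_left _ (by positivity)
        exact Summable.tsum_le_tsum_of_inj (fun k : S => (k : ℤ) - j) hinj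
          (fun c _ => by positivity) (fun k => le_refl _)
          (hsum2.comp_injective hinj) hsum2
    _ = 16 / 9 * T / (j : ℝ) ^ 4 := by ring
end

section
/- For every integer j ≥ 1, ∑_{k=j+1}^{2j} k²/((k³−j³)²·j²) ≤ 8π²/(27·j⁴). -/
/-- For every integer `j ≥ 1`, `∑_{j < k ≤ 2j} k² / ((k³ - j³)² j²) ≤ 8π²/(27 j⁴)`. -/
theorem stmt_12 (j : ℕ) (hj : 1 ≤ j) :
    (∑ k ∈ Finset.Icc (j + 1) (2 * j),
        (k : ℝ) ^ 2 / (((k : ℝ) ^ 3 - (j : ℝ) ^ 3) ^ 2 * (j : ℝ) ^ 2))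
      ≤ 8 * Real.pi ^ 2 / (27 * (j : ℝ) ^ 4) := by
  have hj0 : (0:ℝ) < j := by exact_mod_cast Nat.lt_of_lt_of_le Nat.zero_lt_one hj
  have step1 : (∑ k ∈ Finset.Icc (j + 1) (2 * j),
        (k : ℝ) ^ 2 / (((k : ℝ) ^ 3 - (j : ℝ) ^ 3) ^ 2 * (j : ℝ) ^ 2))
      ≤ ∑ k ∈ Finset.Icc (j + 1) (2 * j),
        1 / (9 * ((k : ℝ) - j) ^ 2 * (j : ℝ) ^ 4) := by
    apply Finset.sum_le_sum
    intro k hk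
    obtain ⟨hk1, _⟩ := Finset.mem_Icc.mp hk
    have hkj : (j:ℝ) < k := by exact_mod_cast Nat.lt_of_succ_le hk1
    have hk0 : (0:ℝ) < k := lt_trans hj0 hkj
    have hd : (0:ℝ) < ((k : ℝ) ^ 3 - (j : ℝ) ^ 3) ^ 2 * (j : ℝ) ^ 2 := by
      have h1 : (0:ℝ) < (k:ℝ)^2 + k*j + j^2 := by positivity
      have : (j:ℝ)^3 < (k:ℝ)^3 := by nlinarith [mul_pos (sub_pos.mpr hkj) h1]
      exact mul_pos (pow_pos (sub_pos.mpr this) 2) (pow_pos hj0 2)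
    have hd2 : (0:ℝ) < 9 * ((k : ℝ) - j) ^ 2 * (j : ℝ) ^ 4 := by
      have : (0:ℝ) < (k:ℝ) - j := by linarith
      positivity
    rw [div_le_div_iff₀ hd hd2]
    have key : 3 * (k:ℝ) * ((k:ℝ) - j) * j ≤ (k:ℝ)^3 - (j:ℝ)^3 := by
      nlinarith [sq_nonneg ((k:ℝ) - j)]
    have hA : (0:ℝ) ≤ 3 * (k:ℝ) * ((k:ℝ) - j) * j := by
      have : (0:ℝ) < (k:ℝ) - j := by linarith
      positivity
    nlinarith [mul_le_mul key key hA (le_trans hA key), sq_nonneg ((k:ℝ)*j)]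
  have step2 : (∑ k ∈ Finset.Icc (j + 1) (2 * j),
        1 / (9 * ((k : ℝ) - j) ^ 2 * (j : ℝ) ^ 4))
      = ∑ l ∈ Finset.Icc 1 j, 1 / (9 * (l : ℝ) ^ 2 * (j : ℝ) ^ 4) := by
    apply Finset.sum_nbij' (fun k => k - j) (fun l => l + j)
    · intro k hk
      obtain ⟨h1, h2⟩ := Finset.mem_Icc.mp hk
      exact Finset.mem_Icc.mpr ⟨by omega, by omega⟩
    · intro l hl
      obtain ⟨h1, h2⟩ := Finset.mem_Icc.mp hl
      exact Finset.mem_Icc.mpr ⟨by omega, by omega⟩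
    · intro k hk
      obtain ⟨h1, _⟩ := Finset.mem_Icc.mp hk
      omega
    · intro l hl; omega
    · intro k hk
      obtain ⟨h1, _⟩ := Finset.mem_Icc.mp hk
      have : ((k - j : ℕ) : ℝ) = (k:ℝ) - j := by
        push_cast [Nat.cast_sub (by omega : j ≤ k)]; ring
      rw [this]
  have step3 : (∑ l ∈ Finset.Icc 1 j, 1 / (9 * (l : ℝ) ^ 2 * (j : ℝ) ^ 4))
      ≤ (Real.pi ^ 2 / 6) / (9 * (j:ℝ)^4) := by
    have heq : ∀ l ∈ Finset.Icc 1 j, 1 / (9 * (l : ℝ) ^ 2 * (j : ℝ) ^ 4)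
        = (1 / (l:ℝ)^2) / (9 * (j:ℝ)^4) := by
      intro l hl; field_simp
    rw [Finset.sum_congr rfl heq, ← Finset.sum_div]
    apply div_le_div_of_nonneg_right _ (by positivity)
    · exact sum_le_hasSum _ (fun i _ => by positivity) hasSum_zeta_two
  have hpi : (3:ℝ) < Real.pi := Real.pi_gt_three
  calc _ ≤ ∑ k ∈ Finset.Icc (j + 1) (2 * j),
        1 / (9 * ((k : ℝ) - j) ^ 2 * (j : ℝ) ^ 4) := step1
    _ = _ := step2
    _ ≤ (Real.pi ^ 2 / 6) / (9 * (j:ℝ)^4) := step3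
    _ ≤ 8 * Real.pi ^ 2 / (27 * (j : ℝ) ^ 4) := by
        rw [div_le_div_iff₀ (by positivity) (by positivity)]
        nlinarith [sq_nonneg ((j:ℝ)^2), pow_pos hj0 4, sq_nonneg Real.pi]
end

section
/- For every integer j ≥ 1, ∑_{k∈ℤ, −j<k<j, k≠0} k²/((k³−j³)²·j²) ≤ 8π²/(27·j⁴). -/
open Real

/-- For every integer `j ≥ 1`,
`∑_{-j < k < j, k ≠ 0} k² / ((k³ - j³)² j²) ≤ 8π²/(27 j⁴)`. -/
theorem stmt_14 (j : ℕ) (hj : 1 ≤ j) :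
    (∑ k ∈ (Finset.Ioo (-(j : ℤ)) (j : ℤ)).erase 0,
        ((k : ℤ) : ℝ) ^ 2 / ((((k : ℤ) : ℝ) ^ 3 - (j : ℝ) ^ 3) ^ 2 * (j : ℝ) ^ 2))
      ≤ 8 * Real.pi ^ 2 / (27 * (j : ℝ) ^ 4) := by
  have hj1 : (1 : ℝ) ≤ (j : ℝ) := by exact_mod_cast hj
  have hjpos : (0 : ℝ) < (j : ℝ) := lt_of_lt_of_le one_pos hj1
  set T := (Finset.Ioo (-(j : ℤ)) (j : ℤ)).erase 0 with hT
  -- Step 1: termwise bound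
  have step1 : ∀ k ∈ T, ((k : ℤ) : ℝ) ^ 2 / ((((k : ℤ) : ℝ) ^ 3 - (j : ℝ) ^ 3) ^ 2 * (j : ℝ) ^ 2)
      ≤ (16 / (9 * (j : ℝ) ^ 4)) * (1 / (((j : ℝ) - (k : ℝ)) ^ 2)) := by
    intro k hk
    simp only [hT, Finset.mem_erase, Finset.mem_Ioo] at hk
    obtain ⟨hk0, hk1, hk2⟩ := hk
    have hx0 : ((k : ℤ) : ℝ) ≠ 0 := by exact_mod_cast hk0
    have hxlt : ((k : ℤ) : ℝ) < (j : ℝ) := by exact_mod_cast hk2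
    set x : ℝ := ((k : ℤ) : ℝ) with hx
    have hq : (0 : ℝ) < x ^ 2 + x * j + (j : ℝ) ^ 2 := by
      nlinarith [sq_nonneg (2 * x + j), hjpos]
    have h3 : x ^ 3 < (j : ℝ) ^ 3 := by
      nlinarith [mul_pos (sub_pos.mpr hxlt) hq]
    have hd1 : (0 : ℝ) < (x ^ 3 - (j : ℝ) ^ 3) ^ 2 * (j : ℝ) ^ 2 := by
      have : x ^ 3 - (j : ℝ) ^ 3 ≠ 0 := by linarith
      positivity
    have hd2 : (0 : ℝ) < 9 * (j : ℝ) ^ 4 * ((j : ℝ) - x) ^ 2 := by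
      have : (j : ℝ) - x ≠ 0 := by linarith
      positivity
    have hrw : (16 / (9 * (j : ℝ) ^ 4)) * (1 / (((j : ℝ) - x) ^ 2))
        = 16 / (9 * (j : ℝ) ^ 4 * ((j : ℝ) - x) ^ 2) := by
      field_simp
    rw [hrw, div_le_div_iff₀ hd1 hd2]
    have key : 9 * x ^ 2 * (j : ℝ) ^ 2 ≤ 16 * (x ^ 2 + x * j + (j : ℝ) ^ 2) ^ 2 := by
      nlinarith [sq_nonneg (x + j), sq_nonneg (x - j), sq_nonneg (x * j),
        sq_nonneg (x ^ 2 + x * j + (j:ℝ) ^ 2)]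
    have key2 := mul_le_mul_of_nonneg_left key
      (mul_nonneg (sq_nonneg ((j:ℝ) - x)) (sq_nonneg (j:ℝ)))
    nlinarith [key2]
  calc (∑ k ∈ T, ((k : ℤ) : ℝ) ^ 2 / ((((k : ℤ) : ℝ) ^ 3 - (j : ℝ) ^ 3) ^ 2 * (j : ℝ) ^ 2))
      ≤ ∑ k ∈ T, (16 / (9 * (j : ℝ) ^ 4)) * (1 / (((j : ℝ) - (k : ℝ)) ^ 2)) :=
        Finset.sum_le_sum step1
    _ = (16 / (9 * (j : ℝ) ^ 4)) * ∑ k ∈ T, (1 / (((j : ℝ) - (k : ℝ)) ^ 2)) := by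
        rw [Finset.mul_sum]
    _ ≤ (16 / (9 * (j : ℝ) ^ 4)) * (π ^ 2 / 6) := by
        apply mul_le_mul_of_nonneg_left _ (by positivity)
        -- compare with Basel sum via the injection k ↦ (j - k).toNat
        have hinj : Set.InjOn (fun k : ℤ => ((j : ℤ) - k).toNat) T := by
          intro a ha b hb hab
          simp only [hT, Finset.coe_erase, Set.mem_diff, Finset.mem_coe, Finset.mem_erase, Finset.mem_Ioo, Set.mem_singleton_iff] at ha hb
          have ha' : (0:ℤ) ≤ (j:ℤ) - a := by omega
          have hb' : (0:ℤ) ≤ (j:ℤ) - b := by omega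
          have h : (j:ℤ) - a = (j:ℤ) - b := by
            rw [← Int.toNat_of_nonneg ha', ← Int.toNat_of_nonneg hb']
            exact_mod_cast hab
          omega
        have hsum : ∑ k ∈ T, (1 / (((j : ℝ) - (k : ℝ)) ^ 2))
            = ∑ n ∈ T.image (fun k : ℤ => ((j : ℤ) - k).toNat), (1 : ℝ) / (n : ℝ) ^ 2 := by
          rw [Finset.sum_image (fun a ha b hb h => hinj ha hb h)]
          apply Finset.sum_congr rfl
          intro k hk
          simp only [hT, Finset.mem_erase, Finset.mem_Ioo] at hk
          have h1 : (0 : ℤ) ≤ (j : ℤ) - k := by omega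
          have h2 : ((((j : ℤ) - k).toNat : ℤ) : ℝ) = (j : ℝ) - (k : ℝ) := by
            rw [Int.toNat_of_nonneg h1]; push_cast; ring
          rw [show ((((j : ℤ) - k).toNat : ℕ) : ℝ) = (j : ℝ) - (k : ℝ) by exact_mod_cast h2]
        rw [hsum]
        exact (Summable.sum_le_tsum _ (fun n _ => by positivity) hasSum_zeta_two.summable).trans_eq
          hasSum_zeta_two.tsum_eq
    _ = 8 * π ^ 2 / (27 * (j : ℝ) ^ 4) := by ring
end

section
/- For every integer j ≥ 1, ∑_{k=2j+1}^{∞} 1/(k³−j³) ≤ 2/(7·j²). -/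
/-- For every integer `j ≥ 1`, `∑_{k > 2j} 1 / (k³ - j³) ≤ 2 / (7 j²)`. -/
theorem stmt_15 (j : ℕ) (hj : 1 ≤ j) :
    (∑' k : {k : ℕ // 2 * j + 1 ≤ k}, 1 / (((k : ℕ) : ℝ) ^ 3 - (j : ℝ) ^ 3))
      ≤ 2 / (7 * (j : ℝ) ^ 2) := by
  have hJ : (1:ℝ) ≤ (j:ℝ) := by exact_mod_cast hj
  set J : ℝ := (j:ℝ) with hJdef
  -- reindex the sum over ℕ
  let e : ℕ ≃ {k : ℕ // 2 * j + 1 ≤ k} :=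
    { toFun := fun n => ⟨n + (2*j+1), Nat.le_add_left _ _⟩
      invFun := fun k => (k : ℕ) - (2*j+1)
      left_inv := fun n => by simp
      right_inv := fun k => by
        ext
        exact Nat.sub_add_cancel k.2 }
  rw [← e.tsum_eq]
  -- the telescoping majorant
  set d : ℕ → ℝ := fun n => 4/7 * (1/(((n:ℝ)+2*J)*((n:ℝ)+2*J+1))) with hd
  have hdnn : ∀ n : ℕ, 0 ≤ d n := by
    intro n
    have h1 : 0 < (n:ℝ)+2*J := by positivity
    have h2 : 0 < (n:ℝ)+2*J+1 := by positivity
    rw [hd]; positivity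
  have hterm : ∀ n : ℕ,
      1 / ((((e n : {k : ℕ // 2 * j + 1 ≤ k}) : ℕ) : ℝ)^3 - J^3) ≤ d n - d (n+1) := by
    intro n
    have hk : (((e n : {k : ℕ // 2 * j + 1 ≤ k}) : ℕ) : ℝ) = (n:ℝ) + 2*J + 1 := by
      show (((n + (2*j+1) : ℕ)) : ℝ) = _
      push_cast
      ring
    rw [hk]
    set x : ℝ := (n:ℝ) with hx
    have hx0 : 0 ≤ x := Nat.cast_nonneg n
    set k : ℝ := x + 2*J + 1 with hkdef
    have hJ0 : (0:ℝ) < J := lt_of_lt_of_le one_pos hJ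
    have hk2J : 2*J + 1 ≤ k := by rw [hkdef]; linarith
    have hk3 : (3:ℝ) ≤ k := by linarith
    have hJk : J < k := by linarith
    have hk0 : (0:ℝ) < k := by linarith
    have hpos1 : 0 < k^3 - J^3 := by
      nlinarith [mul_pos (sub_pos.2 hJk) (show (0:ℝ) < k^2 + k*J + J^2 by positivity)]
    have hpos2 : 0 < (k-1)*k*(k+1) :=
      mul_pos (mul_pos (by linarith) (by linarith)) (by linarith)
    have key : 1 / (k^3 - J^3) ≤ 8 / (7 * ((k-1)*k*(k+1))) := by
      rw [div_le_div_iff₀ hpos1 (by linarith)]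
      nlinarith [pow_le_pow_left₀ (by positivity : (0:ℝ) ≤ 2*J+1) hk2J 3, sq_nonneg J]
    have heq : d n - d (n+1) = 8 / (7 * ((k-1)*k*(k+1))) := by
      rw [hd]
      push_cast
      have h1 : x + 2*J ≠ 0 := by nlinarith
      have h2 : x + 2*J + 1 ≠ 0 := by nlinarith
      have h3 : x + 2*J + 2 ≠ 0 := by nlinarith
      have h4 : (k-1)*k*(k+1) ≠ 0 := ne_of_gt hpos2
      have h5 : k - 1 ≠ 0 := by linarith
      field_simp
      ring
    rw [heq]
    exact key
  have htermnn : ∀ n : ℕ,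
      0 ≤ 1 / ((((e n : {k : ℕ // 2 * j + 1 ≤ k}) : ℕ) : ℝ)^3 - J^3) := by
    intro n
    have hk : (((e n : {k : ℕ // 2 * j + 1 ≤ k}) : ℕ) : ℝ) = (n:ℝ) + 2*J + 1 := by
      show (((n + (2*j+1) : ℕ)) : ℝ) = _
      push_cast
      ring
    rw [hk]
    have hx0 : (0:ℝ) ≤ (n:ℝ) := Nat.cast_nonneg n
    have hJ0 : (0:ℝ) < J := lt_of_lt_of_le one_pos hJ
    have hJk : J < (n:ℝ) + 2*J + 1 := by linarith
    have : 0 < ((n:ℝ) + 2*J + 1)^3 - J^3 := by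
      nlinarith [mul_pos (sub_pos.2 hJk) (show (0:ℝ) < ((n:ℝ)+2*J+1)^2 + ((n:ℝ)+2*J+1)*J + J^2 by positivity)]
    positivity
  apply Real.tsum_le_of_sum_range_le htermnn
  intro n
  calc ∑ i ∈ Finset.range n, 1 / ((((e i : {k : ℕ // 2 * j + 1 ≤ k}) : ℕ) : ℝ)^3 - J^3)
      ≤ ∑ i ∈ Finset.range n, (d i - d (i+1)) :=
        Finset.sum_le_sum (fun i _ => hterm i)
    _ = d 0 - d n := Finset.sum_range_sub' d n
    _ ≤ d 0 := by linarith [hdnn n]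
    _ ≤ 2 / (7 * J^2) := by
        rw [hd]
        simp only [Nat.cast_zero]
        have hJ0 : (0:ℝ) < J := lt_of_lt_of_le one_pos hJ
        rw [mul_one_div, div_div, div_le_div_iff₀ (by nlinarith) (by nlinarith)]
        nlinarith
end

section
/- There exists a constant C>0 such that for every integer j ≥ 2, ∑_{k∈ℤ, k≠0, k≠j} 1/|j³−k³| ≤ C·(log j)/j². -/
open Finset

/-- Telescoping tail bound. -/
lemma stmt16_tail (j : ℕ) (hj : 1 ≤ j) : ∀ M : ℕ, j ≤ M →
    ∑ n ∈ Finset.Ico j M, (1:ℝ)/((n:ℝ)+1)^3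
      ≤ 1/(2*(j:ℝ)*((j:ℝ)+1)) - 1/(2*(M:ℝ)*((M:ℝ)+1)) := by
  intro M hM
  induction M, hM using Nat.le_induction with
  | base => simp
  | succ M hM ih =>
    rw [Finset.sum_Ico_succ_top hM]
    have hx : (1:ℝ) ≤ (M:ℝ) := by
      have : 1 ≤ M := le_trans hj hM
      exact_mod_cast this
    have key : (1:ℝ)/((M:ℝ)+1)^3 ≤ 1/(2*(M:ℝ)*((M:ℝ)+1)) - 1/(2*((M:ℝ)+1)*((M:ℝ)+2)) := by
      have h1 : (1:ℝ)/((M:ℝ)+1)^3 ≤ 1/((M:ℝ)*((M:ℝ)+1)*((M:ℝ)+2)) := by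
        apply one_div_le_one_div_of_le
        · positivity
        · nlinarith
      have h2 : (1:ℝ)/((M:ℝ)*((M:ℝ)+1)*((M:ℝ)+2))
          = 1/(2*(M:ℝ)*((M:ℝ)+1)) - 1/(2*((M:ℝ)+1)*((M:ℝ)+2)) := by
        field_simp
        ring
      linarith
    push_cast
    rw [show ((M:ℝ)+1+1) = (M:ℝ)+2 from by ring]
    linarith

/-- Harmonic bound. -/
lemma stmt16_harm (j : ℕ) (hj : 1 ≤ j) :
    ∑ n ∈ Finset.range j, (1:ℝ)/((n:ℝ)+1) ≤ 1 + Real.log j := by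
  have := harmonic_le_one_add_log j
  have he : ((harmonic j : ℚ) : ℝ) = ∑ n ∈ Finset.range j, (1:ℝ)/((n:ℝ)+1) := by
    rw [harmonic]
    push_cast
    simp [one_div]
  linarith [he ▸ this]

/-- Core finite-sum estimate. -/
lemma stmt16_core (j : ℕ) (hj : 2 ≤ j) (N : ℕ) :
    ∑ n ∈ Finset.range N, (1:ℝ)/(((n:ℝ)+1)*((j:ℝ)^2+((n:ℝ)+1)^2))
      ≤ (3/2 + Real.log j)/(j:ℝ)^2 := by
  have hJ : (2:ℝ) ≤ (j:ℝ) := by exact_mod_cast hj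
  have hJ0 : (0:ℝ) < (j:ℝ) := by linarith
  set M := max N j with hMdef
  have h0 : ∑ n ∈ Finset.range N, (1:ℝ)/(((n:ℝ)+1)*((j:ℝ)^2+((n:ℝ)+1)^2))
      ≤ ∑ n ∈ Finset.range M, (1:ℝ)/(((n:ℝ)+1)*((j:ℝ)^2+((n:ℝ)+1)^2)) := by
    apply Finset.sum_le_sum_of_subset_of_nonneg
    · exact Finset.range_subset_range.mpr (le_max_left _ _)
    · intro i _ _; positivity
  have hsplit : ∑ n ∈ Finset.range M, (1:ℝ)/(((n:ℝ)+1)*((j:ℝ)^2+((n:ℝ)+1)^2))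
      = ∑ n ∈ Finset.range j, (1:ℝ)/(((n:ℝ)+1)*((j:ℝ)^2+((n:ℝ)+1)^2))
        + ∑ n ∈ Finset.Ico j M, (1:ℝ)/(((n:ℝ)+1)*((j:ℝ)^2+((n:ℝ)+1)^2)) := by
    rw [Finset.range_eq_Ico,
      ← Finset.sum_Ico_consecutive _ (Nat.zero_le j) (le_max_right N j)]
    rw [Finset.range_eq_Ico, hMdef]
  have hpart1 : ∑ n ∈ Finset.range j, (1:ℝ)/(((n:ℝ)+1)*((j:ℝ)^2+((n:ℝ)+1)^2))
      ≤ (1 + Real.log j)/(j:ℝ)^2 := by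
    have step : ∀ n ∈ Finset.range j, (1:ℝ)/(((n:ℝ)+1)*((j:ℝ)^2+((n:ℝ)+1)^2))
        ≤ (1/((n:ℝ)+1)) * (1/(j:ℝ)^2) := by
      intro n _
      rw [one_div_mul_one_div]
      apply one_div_le_one_div_of_le
      · positivity
      · nlinarith [sq_nonneg ((n:ℝ)+1)]
    calc ∑ n ∈ Finset.range j, (1:ℝ)/(((n:ℝ)+1)*((j:ℝ)^2+((n:ℝ)+1)^2))
        ≤ ∑ n ∈ Finset.range j, (1/((n:ℝ)+1)) * (1/(j:ℝ)^2) := Finset.sum_le_sum step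
      _ = (∑ n ∈ Finset.range j, (1:ℝ)/((n:ℝ)+1)) * (1/(j:ℝ)^2) := by
          rw [Finset.sum_mul]
      _ ≤ (1 + Real.log j) * (1/(j:ℝ)^2) := by
          apply mul_le_mul_of_nonneg_right (stmt16_harm j (by omega)) (by positivity)
      _ = (1 + Real.log j)/(j:ℝ)^2 := by ring
  have hpart2 : ∑ n ∈ Finset.Ico j M, (1:ℝ)/(((n:ℝ)+1)*((j:ℝ)^2+((n:ℝ)+1)^2))
      ≤ (1/2)/(j:ℝ)^2 := by
    have step : ∀ n ∈ Finset.Ico j M, (1:ℝ)/(((n:ℝ)+1)*((j:ℝ)^2+((n:ℝ)+1)^2))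
        ≤ 1/((n:ℝ)+1)^3 := by
      intro n hn
      have hnj : j ≤ n := (Finset.mem_Ico.mp hn).1
      have : (j:ℝ) ≤ (n:ℝ) := by exact_mod_cast hnj
      apply one_div_le_one_div_of_le
      · positivity
      · nlinarith [sq_nonneg ((n:ℝ)+1)]
    have htail := stmt16_tail j (by omega) M (le_max_right N j)
    have hM1 : (0:ℝ) < (M:ℝ)+1 := by positivity
    have hMpos : (0:ℝ) ≤ 1/(2*(M:ℝ)*((M:ℝ)+1)) := by positivity
    calc ∑ n ∈ Finset.Ico j M, (1:ℝ)/(((n:ℝ)+1)*((j:ℝ)^2+((n:ℝ)+1)^2))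
        ≤ ∑ n ∈ Finset.Ico j M, (1:ℝ)/((n:ℝ)+1)^3 := Finset.sum_le_sum step
      _ ≤ 1/(2*(j:ℝ)*((j:ℝ)+1)) - 1/(2*(M:ℝ)*((M:ℝ)+1)) := htail
      _ ≤ 1/(2*(j:ℝ)*((j:ℝ)+1)) := by linarith
      _ ≤ (1/2)/(j:ℝ)^2 := by
          rw [div_le_div_iff₀ (by positivity) (by positivity)]
          nlinarith
  calc ∑ n ∈ Finset.range N, (1:ℝ)/(((n:ℝ)+1)*((j:ℝ)^2+((n:ℝ)+1)^2))
      ≤ _ := h0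
    _ = _ := hsplit
    _ ≤ (1 + Real.log j)/(j:ℝ)^2 + (1/2)/(j:ℝ)^2 := add_le_add hpart1 hpart2
    _ = (3/2 + Real.log j)/(j:ℝ)^2 := by ring

/-- Pointwise bound: `1/|J³-x³| ≤ 8/(|J-x| (J²+(J-x)²))`. -/
lemma stmt16_ptwise (J x : ℝ) (hJ : 2 ≤ J) (hx : x ≠ J) :
    1 / |J^3 - x^3| ≤ 8 / (|J - x| * (J^2 + (J - x)^2)) := by
  have hd : J - x ≠ 0 := sub_ne_zero.mpr (Ne.symm hx)
  have hdabs : 0 < |J - x| := abs_pos.mpr hd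
  have hq : 0 < J^2 + J*x + x^2 := by nlinarith [sq_nonneg (J + 2*x), sq_nonneg J]
  have hfac : J^3 - x^3 = (J - x) * (J^2 + J*x + x^2) := by ring
  have habs : |J^3 - x^3| = |J - x| * (J^2 + J*x + x^2) := by
    rw [hfac, abs_mul, abs_of_pos hq]
  have hA : 0 < |J^3 - x^3| := by rw [habs]; positivity
  have hB : 0 < |J - x| * (J^2 + (J - x)^2) := by positivity
  rw [div_le_div_iff₀ hA hB]
  rw [habs]
  have : J^2 + (J - x)^2 ≤ 8 * (J^2 + J*x + x^2) := by
    nlinarith [sq_nonneg (6*J + 5*x), sq_nonneg x]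
  nlinarith [hdabs.le, mul_le_mul_of_nonneg_left this hdabs.le]

/-- There is `C > 0` such that for every integer `j ≥ 2`,
`∑_{k ≠ 0, k ≠ j} 1 / |j³ - k³| ≤ C log j / j²`. -/
theorem stmt_16 :
    ∃ C : ℝ, 0 < C ∧ ∀ j : ℕ, 2 ≤ j →
      (∑' k : {k : ℤ // k ≠ 0 ∧ k ≠ (j : ℤ)},
          1 / |(j : ℝ) ^ 3 - ((k : ℤ) : ℝ) ^ 3|)
        ≤ C * Real.log j / (j : ℝ) ^ 2 := by
  refine ⟨100, by norm_num, ?_⟩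
  intro j hj
  have hJ : (2:ℝ) ≤ (j:ℝ) := by exact_mod_cast hj
  have hJ0 : (0:ℝ) < (j:ℝ) := by linarith
  set g : ℤ → ℝ := fun m => 8 / (|(m:ℝ)| * ((j:ℝ)^2 + (m:ℝ)^2)) with hg_def
  have hg_nonneg : ∀ m, 0 ≤ g m := fun m => by
    simp only [hg_def]; positivity
  -- summability of the majorant
  have hsum3 : Summable (fun n : ℤ => (1:ℝ)/|(n:ℝ)|^3) := by
    have h := (Real.summable_one_div_int_pow (p := 3)).mpr (by norm_num)
    refine h.abs.congr fun n => ?_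
    rw [abs_div, abs_one, abs_pow]
  have hg : Summable g := by
    apply Summable.of_nonneg_of_le hg_nonneg ?_ (hsum3.mul_left 8)
    intro m
    rcases eq_or_ne m 0 with rfl | hm
    · simp [hg_def]
    · have hmabs : (0:ℝ) < |(m:ℝ)| := by
        rw [abs_pos]
        exact_mod_cast hm
      simp only [hg_def]
      rw [mul_one_div]
      apply div_le_div_of_nonneg_left (by norm_num) (by positivity)
      nlinarith [sq_nonneg (m:ℝ), sq_abs (m:ℝ), hmabs.le, sq_nonneg (j:ℝ), mul_le_mul_of_nonneg_left (sq_nonneg (j:ℝ)) hmabs.le]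
    -- goal leftover?
  -- the injection k ↦ j - k
  set i : {k : ℤ // k ≠ 0 ∧ k ≠ (j:ℤ)} → ℤ := fun k => (j:ℤ) - k.val with hi_def
  have hinj : Function.Injective i := by
    intro a b h
    apply Subtype.ext
    simpa [hi_def, sub_right_inj] using h
  have hle : ∀ k : {k : ℤ // k ≠ 0 ∧ k ≠ (j:ℤ)},
      1 / |(j:ℝ)^3 - ((k:ℤ):ℝ)^3| ≤ g (i k) := by
    intro k
    have hxJ : ((k:ℤ):ℝ) ≠ (j:ℝ) := by
      intro h
      exact k.2.2 (by exact_mod_cast h)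
    have hpt := stmt16_ptwise (j:ℝ) ((k:ℤ):ℝ) hJ hxJ
    have hcast : ((i k : ℤ) : ℝ) = (j:ℝ) - ((k:ℤ):ℝ) := by
      simp only [hi_def]
      push_cast
      ring
    simp only [hg_def]
    rw [hcast]
    exact hpt
  have hgi : Summable (fun k => g (i k)) := hg.comp_injective hinj
  have hf : Summable (fun k : {k : ℤ // k ≠ 0 ∧ k ≠ (j:ℤ)} =>
      1 / |(j:ℝ)^3 - ((k:ℤ):ℝ)^3|) :=
    Summable.of_nonneg_of_le (fun k => by positivity) hle hgi
  have hstep1 : (∑' k : {k : ℤ // k ≠ 0 ∧ k ≠ (j:ℤ)},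
      1 / |(j:ℝ)^3 - ((k:ℤ):ℝ)^3|) ≤ ∑' m : ℤ, g m :=
    Summable.tsum_le_tsum_of_inj i hinj (fun c _ => hg_nonneg c) hle hf hg
  -- decompose the ℤ-sum
  have hg1 : Summable (fun n : ℕ => g n) :=
    hg.comp_injective (fun a b h => by exact_mod_cast h)
  have hg2 : Summable (fun n : ℕ => g (-((n:ℤ)+1))) :=
    hg.comp_injective (fun a b h => by omega)
  have hsum_nat : Summable (fun n : ℕ => g ((n:ℤ)+1)) :=
    hg.comp_injective (fun a b h => by omega)
  have hdec : ∑' n : ℤ, g n = (∑' n : ℕ, g n) + ∑' n : ℕ, g (-((n:ℤ)+1)) :=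
    tsum_of_nat_of_neg_add_one hg1 hg2
  have hzero : g 0 = 0 := by simp [hg_def]
  have hnat : ∑' n : ℕ, g n = ∑' n : ℕ, g ((n:ℤ)+1) := by
    rw [Summable.tsum_eq_zero_add hg1]
    simp only [Nat.cast_zero, hzero, zero_add]
    exact tsum_congr fun n => by norm_num
  have heven : ∀ n : ℕ, g (-((n:ℤ)+1)) = g ((n:ℤ)+1) := by
    intro n
    simp only [hg_def]
    push_cast
    rw [abs_neg, neg_sq]
  have htsum_g : ∑' n : ℤ, g n = 2 * ∑' n : ℕ, g ((n:ℤ)+1) := by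
    rw [hdec, hnat, tsum_congr heven]
    ring
  -- bound the ℕ-sum
  have hnatbound : ∑' n : ℕ, g ((n:ℤ)+1) ≤ 8 * ((3/2 + Real.log j)/(j:ℝ)^2) := by
    apply Summable.tsum_le_of_sum_le hsum_nat
    intro s
    have hsub : s ⊆ Finset.range (s.sup id + 1) := fun n hn =>
      Finset.mem_range.mpr (Nat.lt_succ_of_le (Finset.le_sup (f := id) hn))
    calc ∑ n ∈ s, g ((n:ℤ)+1)
        ≤ ∑ n ∈ Finset.range (s.sup id + 1), g ((n:ℤ)+1) :=
          Finset.sum_le_sum_of_subset_of_nonneg hsub (fun m _ _ => hg_nonneg _)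
      _ = ∑ n ∈ Finset.range (s.sup id + 1),
            8 * ((1:ℝ)/(((n:ℝ)+1)*((j:ℝ)^2+((n:ℝ)+1)^2))) := by
          apply Finset.sum_congr rfl
          intro n _
          simp only [hg_def]
          push_cast
          rw [abs_of_pos (show (0:ℝ) < (n:ℝ)+1 by positivity), mul_one_div]
      _ = 8 * ∑ n ∈ Finset.range (s.sup id + 1),
            (1:ℝ)/(((n:ℝ)+1)*((j:ℝ)^2+((n:ℝ)+1)^2)) := by
          rw [Finset.mul_sum]
      _ ≤ 8 * ((3/2 + Real.log j)/(j:ℝ)^2) := by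
          apply mul_le_mul_of_nonneg_left (stmt16_core j hj _) (by norm_num)
  -- conclude
  have hlog2 : (0.6931471803:ℝ) < Real.log 2 := Real.log_two_gt_d9
  have hlogJ : Real.log 2 ≤ Real.log j := Real.log_le_log (by norm_num) hJ
  calc (∑' k : {k : ℤ // k ≠ 0 ∧ k ≠ (j:ℤ)}, 1 / |(j:ℝ)^3 - ((k:ℤ):ℝ)^3|)
      ≤ ∑' m : ℤ, g m := hstep1
    _ = 2 * ∑' n : ℕ, g ((n:ℤ)+1) := htsum_g
    _ ≤ 2 * (8 * ((3/2 + Real.log j)/(j:ℝ)^2)) := by linarith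
    _ = (24 + 16 * Real.log j)/(j:ℝ)^2 := by ring
    _ ≤ 100 * Real.log j / (j:ℝ)^2 := by
        gcongr
        linarith
end

section
/- For every λ∈ℝ there exists a constant C>0 such that for every nonzero integer j, ∑_{k∈ℤ, k≠0, k≠j} (λ² + k⁶)/((j³−k³)²·k²) ≤ C. -/
/-- Key pointwise bound: for `y ≠ 0`, `x ≠ y`, `1 ≤ y²`,
`(λ² + y⁶)/((x³-y³)² y²) ≤ (16/9)(λ²+1)/(x-y)²`. -/
lemma stmt_17_key (lam x y : ℝ) (hy : y ≠ 0) (hxy : x ≠ y) (hy2 : 1 ≤ y ^ 2) :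
    (lam ^ 2 + y ^ 6) / ((x ^ 3 - y ^ 3) ^ 2 * y ^ 2)
      ≤ 16 / 9 * (lam ^ 2 + 1) * (1 / (x - y) ^ 2) := by
  have hq : 0 < x ^ 2 + x * y + y ^ 2 := by
    have hy2' : 0 < y ^ 2 := by positivity
    nlinarith [sq_nonneg (2 * x + y)]
  have hxy' : x - y ≠ 0 := sub_ne_zero.mpr hxy
  have hE : 0 < (x - y) ^ 2 := by positivity
  have hD : 0 < (x ^ 3 - y ^ 3) ^ 2 * y ^ 2 := by
    have hfac : x ^ 3 - y ^ 3 = (x - y) * (x ^ 2 + x * y + y ^ 2) := by ring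
    rw [hfac]
    positivity
  rw [mul_one_div, div_le_div_iff₀ hD hE]
  have hy6 : 1 ≤ y ^ 6 := by nlinarith [pow_le_pow_left₀ zero_le_one hy2 3]
  have h34 : (3 / 4) * y ^ 2 ≤ x ^ 2 + x * y + y ^ 2 := by
    nlinarith [sq_nonneg (2 * x + y)]
  have hsq : ((3 / 4) * y ^ 2) ^ 2 ≤ (x ^ 2 + x * y + y ^ 2) ^ 2 :=
    pow_le_pow_left₀ (by positivity) h34 2
  have h1 : (9 / 16) * (x - y) ^ 2 * y ^ 6 ≤ (x ^ 3 - y ^ 3) ^ 2 * y ^ 2 := by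
    have := mul_le_mul_of_nonneg_left hsq
      (mul_nonneg (sq_nonneg (x - y)) (sq_nonneg y))
    nlinarith [this]
  have h2 : lam ^ 2 + y ^ 6 ≤ (lam ^ 2 + 1) * y ^ 6 := by nlinarith [sq_nonneg lam]
  have hA := mul_le_mul_of_nonneg_right h2 (sq_nonneg (x - y))
  have hB := mul_le_mul_of_nonneg_left h1 (by positivity : (0:ℝ) ≤ lam ^ 2 + 1)
  nlinarith [hA, hB]

/-- For every real `λ` there is `C > 0` such that for every nonzero integer `j`,
`∑_{k ≠ 0, k ≠ j} (λ² + k⁶) / ((j³ - k³)² k²) ≤ C`. -/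
theorem stmt_17 (lam : ℝ) :
    ∃ C : ℝ, 0 < C ∧ ∀ j : ℤ, j ≠ 0 →
      (∑' k : {k : ℤ // k ≠ 0 ∧ k ≠ j},
          (lam ^ 2 + ((k : ℤ) : ℝ) ^ 6) /
            (((j : ℝ) ^ 3 - ((k : ℤ) : ℝ) ^ 3) ^ 2 * ((k : ℤ) : ℝ) ^ 2))
        ≤ C := by
  set c : ℝ := 16 / 9 * (lam ^ 2 + 1) with hc_def
  have hc : 0 ≤ c := by positivity
  have hsum2 : Summable (fun n : ℤ => 1 / ((n : ℝ)) ^ 2) :=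
    Real.summable_one_div_int_pow.mpr one_lt_two
  have hS : 0 ≤ ∑' n : ℤ, 1 / ((n : ℝ)) ^ 2 := tsum_nonneg fun n => by positivity
  refine ⟨c * (∑' n : ℤ, 1 / ((n : ℝ)) ^ 2) + 1, by nlinarith, ?_⟩
  intro j hj
  set g : ℤ → ℝ := fun k => c * (1 / ((j : ℝ) - (k : ℝ)) ^ 2) with hg_def
  have hg : Summable g := by
    have h1 : Summable ((fun n : ℤ => 1 / ((n : ℝ)) ^ 2) ∘ (Equiv.subLeft j)) :=
      (Equiv.subLeft j).summable_iff.mpr hsum2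
    apply Summable.mul_left
    have : (fun k : ℤ => 1 / ((j : ℝ) - (k : ℝ)) ^ 2)
        = (fun n : ℤ => 1 / ((n : ℝ)) ^ 2) ∘ (Equiv.subLeft j) := by
      funext k
      simp only [Function.comp_apply, Equiv.subLeft_apply]
      push_cast
      ring_nf
    rw [this]
    exact h1
  have hgnn : ∀ k : ℤ, 0 ≤ g k := fun k => mul_nonneg hc (by positivity)
  have hle : ∀ k : {k : ℤ // k ≠ 0 ∧ k ≠ j},
      (lam ^ 2 + ((k : ℤ) : ℝ) ^ 6) /
        (((j : ℝ) ^ 3 - ((k : ℤ) : ℝ) ^ 3) ^ 2 * ((k : ℤ) : ℝ) ^ 2) ≤ g (k : ℤ) := by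
    rintro ⟨k, hk0, hkj⟩
    have hy : ((k : ℤ) : ℝ) ≠ 0 := Int.cast_ne_zero.mpr hk0
    have hxy : (j : ℝ) ≠ ((k : ℤ) : ℝ) := by exact_mod_cast (Ne.symm hkj)
    have habs : (1 : ℝ) ≤ |((k : ℤ) : ℝ)| := by
      have := Int.one_le_abs hk0
      calc (1 : ℝ) ≤ ((|k| : ℤ) : ℝ) := by exact_mod_cast this
        _ = |((k : ℤ) : ℝ)| := by push_cast; ring
    have hy2 : 1 ≤ ((k : ℤ) : ℝ) ^ 2 := by
      nlinarith [abs_nonneg ((k : ℤ) : ℝ), sq_abs ((k : ℤ) : ℝ)]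
    exact stmt_17_key lam (j : ℝ) ((k : ℤ) : ℝ) hy hxy hy2
  have hnn : ∀ k : {k : ℤ // k ≠ 0 ∧ k ≠ j},
      0 ≤ (lam ^ 2 + ((k : ℤ) : ℝ) ^ 6) /
        (((j : ℝ) ^ 3 - ((k : ℤ) : ℝ) ^ 3) ^ 2 * ((k : ℤ) : ℝ) ^ 2) :=
    fun k => by positivity
  have hgsub : Summable (fun k : {k : ℤ // k ≠ 0 ∧ k ≠ j} => g (k : ℤ)) :=
    hg.subtype {k : ℤ | k ≠ 0 ∧ k ≠ j}
  have hfs : Summable (fun k : {k : ℤ // k ≠ 0 ∧ k ≠ j} =>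
      (lam ^ 2 + ((k : ℤ) : ℝ) ^ 6) /
        (((j : ℝ) ^ 3 - ((k : ℤ) : ℝ) ^ 3) ^ 2 * ((k : ℤ) : ℝ) ^ 2)) :=
    Summable.of_nonneg_of_le hnn hle hgsub
  calc (∑' k : {k : ℤ // k ≠ 0 ∧ k ≠ j},
          (lam ^ 2 + ((k : ℤ) : ℝ) ^ 6) /
            (((j : ℝ) ^ 3 - ((k : ℤ) : ℝ) ^ 3) ^ 2 * ((k : ℤ) : ℝ) ^ 2))
      ≤ ∑' k : {k : ℤ // k ≠ 0 ∧ k ≠ j}, g (k : ℤ) := Summable.tsum_le_tsum hle hfs hgsub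
    _ ≤ ∑' k : ℤ, g k := Summable.tsum_subtype_le g {k : ℤ | k ≠ 0 ∧ k ≠ j} hgnn hg
    _ = c * ∑' k : ℤ, 1 / ((j : ℝ) - (k : ℝ)) ^ 2 := tsum_mul_left
    _ = c * ∑' n : ℤ, 1 / ((n : ℝ)) ^ 2 := by
        congr 1
        rw [← (Equiv.subLeft j).tsum_eq (fun n : ℤ => 1 / ((n : ℝ)) ^ 2)]
        apply tsum_congr
        intro k
        simp only [Equiv.subLeft_apply]
        push_cast
        ring_nf
    _ ≤ c * (∑' n : ℤ, 1 / ((n : ℝ)) ^ 2) + 1 := by linarith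
end
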